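/- arXiv:1809.08091 — 6 statements merged into one kernel-verified Lean document; each statement's English description precedes it below -/
import Mathlib

section
/- Let Γ be a finite simplicial graph and 𝒢 = (G_v)_{v∈V} a family of nontrivial groups. Assume Γ is not the star of a vertex, i.e. there is no vertex u ∈ V with V = star(u). If an automorphism of Γ𝒢 is simultaneously an inner automorphism (of the form x ↦ g x g⁻¹ for some g ∈ Γ𝒢) and a local automorphism, then it is the identity. -/
open scoped Pointwise

section GraphProductDefs

variable {V : Type} (Γ : SimpleGraph V) (G : V → Type) [∀ v, Group (G v)]

/-- The set of commutation relators defining the graph product of the family `G` over `Γ`. -/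
def graphProductRels : Set (Monoid.CoprodI G) :=
  { x | ∃ (u v : V) (g : G u) (h : G v), Γ.Adj u v ∧
      x = Monoid.CoprodI.of g * Monoid.CoprodI.of h *
        (Monoid.CoprodI.of g)⁻¹ * (Monoid.CoprodI.of h)⁻¹ }

/-- The graph product of the family `G` over the simplicial graph `Γ`. -/
abbrev GraphProduct : Type :=
  Monoid.CoprodI G ⧸ Subgroup.normalClosure (graphProductRels Γ G)

/-- The canonical map from a vertex group to the graph product. -/
def GraphProduct.of (v : V) : G v →* GraphProduct Γ G :=
  (QuotientGroup.mk' (Subgroup.normalClosure (graphProductRels Γ G))).comp Monoid.CoprodI.of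

/-- The image `Ĝ_v` of a vertex group in the graph product. -/
def vertexSubgroup (v : V) : Subgroup (GraphProduct Γ G) :=
  (GraphProduct.of Γ G v).range

/-- The subgroup `⟨Λ⟩` generated by the vertex groups with vertices in `Λ`. -/
def spanSubgroup (Λ : Set V) : Subgroup (GraphProduct Γ G) :=
  ⨆ v ∈ Λ, vertexSubgroup Γ G v

/-- The star of a vertex: the vertex together with its neighbours. -/
def starSet (u : V) : Set V := insert u {w | Γ.Adj u w}

/-- `Λ` is a connected component of the subgraph of `Γ` induced on `S`: it is a nonempty
connected subset of `S` closed under adjacency within `S`. -/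
def IsConnCompOf (S Λ : Set V) : Prop :=
  Λ.Nonempty ∧ Λ ⊆ S ∧ (Γ.induce Λ).Connected ∧
    ∀ a ∈ Λ, ∀ b ∈ S, Γ.Adj a b → b ∈ Λ

/-- A local automorphism: permutes the vertex subgroups according to a graph automorphism. -/
def IsLocalAut (φ : MulAut (GraphProduct Γ G)) : Prop :=
  ∃ σ : Γ ≃g Γ, ∀ v : V,
    Subgroup.map φ.toMonoidHom (vertexSubgroup Γ G v) = vertexSubgroup Γ G (σ v)

/-- A partial conjugation: conjugates the vertex groups of a connected component `Λ` of the
graph induced on the complement of the star of `u` by an element `h ∈ Ĝ_u`, and fixes the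
other vertex groups pointwise. -/
def IsPartialConj (φ : MulAut (GraphProduct Γ G)) : Prop :=
  ∃ (u : V) (Λ : Set V) (h : GraphProduct Γ G),
    h ∈ vertexSubgroup Γ G u ∧
    IsConnCompOf Γ {w | w ∉ starSet Γ u} Λ ∧
    (∀ w ∈ Λ, ∀ x ∈ vertexSubgroup Γ G w, φ x = h * x * h⁻¹) ∧
    (∀ w, w ∉ Λ → ∀ x ∈ vertexSubgroup Γ G w, φ x = x)

/-- The subgroup of `Aut(Γ𝒢)` generated by local automorphisms and partial conjugations. -/
def ConjP : Subgroup (MulAut (GraphProduct Γ G)) :=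
  Subgroup.closure {φ | IsLocalAut Γ G φ ∨ IsPartialConj Γ G φ}

/-- A conjugating automorphism: sends each vertex subgroup to a conjugate of a vertex
subgroup. -/
def IsConjugating (φ : MulAut (GraphProduct Γ G)) : Prop :=
  ∀ v : V, ∃ (w : V) (g : GraphProduct Γ G),
    Subgroup.map φ.toMonoidHom (vertexSubgroup Γ G v) =
      Subgroup.map (MulAut.conj g).toMonoidHom (vertexSubgroup Γ G w)

end GraphProductDefs

section Extra

variable {V : Type} (Γ : SimpleGraph V) (G : V → Type) [∀ v, Group (G v)]

/-- The Cayley graph `X(Γ,𝒢)` of the graph product with respect to the union of the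
(nontrivial elements of the) vertex subgroups. -/
def cayley : SimpleGraph (GraphProduct Γ G) where
  Adj x y := x ≠ y ∧ ∃ v : V, x⁻¹ * y ∈ vertexSubgroup Γ G v
  symm := ⟨by
    rintro x y ⟨hxy, v, hv⟩
    exact ⟨hxy.symm, v, by simpa using (vertexSubgroup Γ G v).inv_mem hv⟩⟩
  loopless := ⟨fun x h => h.1 rfl⟩

/-- A molecular graph: finite, connected, minimal degree at least 2, girth at least 5. -/
def Molecular : Prop :=
  Γ.Connected ∧ (∀ v : V, 2 ≤ (Γ.neighborSet v).ncard) ∧ 5 ≤ Γ.girth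

/-- An atomic graph: molecular, and the subgraph induced on the complement of each star is
nonempty and connected. -/
def Atomic : Prop :=
  Molecular Γ ∧ ∀ u : V, {w | w ∉ starSet Γ u}.Nonempty ∧
    (Γ.induce {w | w ∉ starSet Γ u}).Connected

/-- The link of a set of vertices: the vertices adjacent to every vertex of the set. -/
def linkSet (Λ : Set V) : Set V := {w | ∀ a ∈ Λ, Γ.Adj w a}

/-- A subgroup decomposes non-trivially as a direct product. -/
def IsNontrivDirectProduct (H : Subgroup (GraphProduct Γ G)) : Prop :=
  ∃ (A B : Type) (_ : Group A) (_ : Group B),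
    Nontrivial A ∧ Nontrivial B ∧ Nonempty (H ≃* A × B)

/-- `Γ` has a SIL: two distinct non-adjacent vertices `u`, `v` such that the graph induced on
the complement of `link(u) ∩ link(v)` has a connected component containing neither `u` nor
`v`. -/
def HasSIL : Prop :=
  ∃ u v : V, u ≠ v ∧ ¬ Γ.Adj u v ∧
    ∃ Λ : Set V, IsConnCompOf Γ {w | ¬ (Γ.Adj u w ∧ Γ.Adj v w)} Λ ∧ u ∉ Λ ∧ v ∉ Λ

end Extra


section AuxCoprodI

open Monoid Monoid.CoprodI

variable {ι : Type*} {M : ι → Type*} [∀ i, Group (M i)]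

theorem word_prod_injective :
    Function.Injective (Monoid.CoprodI.Word.prod : Word M → CoprodI M) := by
  classical
  have : (Monoid.CoprodI.Word.prod : Word M → CoprodI M) = ⇑(Word.equiv (M := M)).symm := rfl
  rw [this]
  exact (Word.equiv (M := M)).symm.injective

theorem neword_conj_ne {h l i : ι} (u : NeWord M h l) (hli : l ≠ i)
    {a : M i} (ha : a ≠ 1) (a' : M i) :
    u.prod * of a * u.prod⁻¹ ≠ of a' := by
  classical
  intro heq
  have hil : (i : ι) ≠ l := hli.symm
  set W : NeWord M h h := (u.append hli (NeWord.singleton a ha)).append hil u.inv with hWdef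
  have hW : W.prod = of a' := by
    rw [hWdef, NeWord.append_prod, NeWord.append_prod, NeWord.prod_singleton, NeWord.inv_prod]
    rw [mul_assoc] at heq ⊢
    exact heq
  have hlen : W.toList.length = u.toList.length + 1 + u.inv.toList.length := by
    simp [hWdef]
    omega
  have hu0 : u.toList.length ≠ 0 := by
    simp [List.length_eq_zero_iff, u.toList_ne_nil]
  by_cases ha' : a' = 1
  · have h1 : W.prod = Word.prod Word.empty := by
      rw [hW, ha', Word.prod_empty, map_one]
    have h2 : W.toWord = Word.empty := word_prod_injective h1
    have h3 : W.toList = [] := by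
      have := congrArg Monoid.CoprodI.Word.toList h2
      simpa [NeWord.toWord] using this
    exact W.toList_ne_nil h3
  · have h1 : W.prod = (NeWord.singleton a' ha').prod := by
      rw [hW, NeWord.prod_singleton]
    have h2 : W.toWord = (NeWord.singleton a' ha').toWord := word_prod_injective h1
    have h3 : W.toList = [⟨i, a'⟩] := by
      have := congrArg Monoid.CoprodI.Word.toList h2
      simpa [NeWord.toWord] using this
    have := congrArg List.length h3
    rw [hlen] at this
    simp only [List.length_singleton] at this
    omega

theorem neword_decomp :
    ∀ {h l : ι} (u : NeWord M h l),
      (h = l ∧ ∃ c : M l, c ≠ 1 ∧ u.prod = of c) ∨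
      (∃ (l' : ι) (_ : l' ≠ l) (u' : NeWord M h l') (c : M l), c ≠ 1 ∧
        u.prod = u'.prod * of c) := by
  intro h l u
  induction u with
  | singleton x hx => exact Or.inl ⟨rfl, x, hx, by simp⟩
  | @append i j k l w₁ hne w₂ ih₁ ih₂ =>
    rcases ih₂ with ⟨hkl, c, hc, hp⟩ | ⟨l', hl', u₂, c, hc, hp⟩
    · subst hkl
      exact Or.inr ⟨j, hne, w₁, c, hc, by rw [NeWord.append_prod, hp]⟩
    · exact Or.inr ⟨l', hl', w₁.append hne u₂, c, hc, by
        rw [NeWord.append_prod, NeWord.append_prod, hp, mul_assoc]⟩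

/-- Malnormality-type statement: if `x` conjugates a nontrivial element of the `i`-th free
factor into the `i`-th free factor, then `x` belongs to that factor. -/
theorem conj_mem_range_of {i : ι} {x : CoprodI M} {a a' : M i} (ha : a ≠ 1)
    (heq : x * of a * x⁻¹ = of a') : ∃ c : M i, x = of c := by
  classical
  have hx : Word.prod (Word.equiv x) = x := (Word.equiv (M := M)).symm_apply_apply x
  by_cases hw : Word.equiv x = Word.empty
  · refine ⟨1, ?_⟩
    rw [map_one]
    rw [hw, Word.prod_empty] at hx
    exact hx.symm
  · obtain ⟨h, l, u, hu⟩ := NeWord.of_word _ hw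
    have hxu : u.prod = x := by
      rw [NeWord.prod, hu, hx]
    by_cases hli : l = i
    · subst hli
      rcases neword_decomp u with ⟨_, c, hc, hp⟩ | ⟨l', hl', u', c, hc, hp⟩
      · exact ⟨c, by rw [← hxu, hp]⟩
      · exfalso
        have hca : c * a * c⁻¹ ≠ 1 := by
          simp only [ne_eq, conj_eq_one_iff]
          exact ha
        refine neword_conj_ne u' hl' hca a' ?_
        have : u'.prod * of (c * a * c⁻¹) * u'.prod⁻¹
            = x * of a * x⁻¹ := by
          rw [← hxu, hp]
          simp only [map_mul, map_inv, mul_inv_rev]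
          group
        rw [this, heq]
    · exact absurd heq (by rw [← hxu]; exact neword_conj_ne u hli ha a')

/-- If `x` normalizes two distinct nontrivial free factors, then `x = 1`. -/
theorem eq_one_of_normalizes_two {i j : ι} (hij : i ≠ j)
    [Nontrivial (M i)] [Nontrivial (M j)] {x : CoprodI M}
    (hi : ∀ a : M i, ∃ a' : M i, x * of a * x⁻¹ = of a')
    (hj : ∀ b : M j, ∃ b' : M j, x * of b * x⁻¹ = of b') : x = 1 := by
  classical
  obtain ⟨a, ha⟩ := exists_ne (1 : M i)
  obtain ⟨b, hb⟩ := exists_ne (1 : M j)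
  obtain ⟨a', ha'⟩ := hi a
  obtain ⟨b', hb'⟩ := hj b
  obtain ⟨c, hc⟩ := conj_mem_range_of ha ha'
  obtain ⟨d, hd⟩ := conj_mem_range_of hb hb'
  have hpc : (lift <| Pi.mulSingle i (MonoidHom.id (M i))) x = c := by
    rw [hc, lift_of, Pi.mulSingle_eq_same, MonoidHom.id_apply]
  have hpd : (lift <| Pi.mulSingle i (MonoidHom.id (M i))) x = 1 := by
    rw [hd, lift_of, Pi.mulSingle_eq_of_ne hij.symm, MonoidHom.one_apply]
  have hc1 : c = 1 := by rw [← hpc, hpd]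
  rw [hc, hc1, map_one]

end AuxCoprodI

section AuxGraphProduct

open Monoid

variable {V : Type} (Γ : SimpleGraph V) (G : V → Type) [∀ v, Group (G v)]

/-- Universal property of the graph product. -/
def gpLift {N : Type*} [Group N] (f : ∀ v, G v →* N)
    (hf : ∀ ⦃u v : V⦄, Γ.Adj u v → ∀ (g : G u) (h : G v), Commute (f u g) (f v h)) :
    GraphProduct Γ G →* N :=
  QuotientGroup.lift _ (CoprodI.lift f) (by
    refine Subgroup.normalClosure_le_normal ?_
    rintro y ⟨u, v, g, h, hadj, rfl⟩
    simp only [SetLike.mem_coe, MonoidHom.mem_ker, map_mul, map_inv, CoprodI.lift_of]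
    have hcomm := hf hadj g h
    rw [hcomm]
    group)

@[simp]
theorem gpLift_of {N : Type*} [Group N] (f : ∀ v, G v →* N)
    (hf : ∀ ⦃u v : V⦄, Γ.Adj u v → ∀ (g : G u) (h : G v), Commute (f u g) (f v h))
    (v : V) (x : G v) :
    gpLift Γ G f hf (GraphProduct.of Γ G v x) = f v x := by
  simp [gpLift, GraphProduct.of, CoprodI.lift_of]

open Classical in
/-- Retraction onto a single vertex group. -/
noncomputable def projVert (v : V) : GraphProduct Γ G →* G v :=
  gpLift Γ G (Pi.mulSingle v (MonoidHom.id (G v))) (by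
    intro u u' hadj g h
    by_cases hu : u = v
    · subst hu
      have hu' : u' ≠ u := hadj.ne.symm
      rw [Pi.mulSingle_eq_of_ne hu']
      exact Commute.one_right _
    · rw [Pi.mulSingle_eq_of_ne hu]
      exact Commute.one_left _)

theorem projVert_of_same (v : V) (x : G v) :
    projVert Γ G v (GraphProduct.of Γ G v x) = x := by
  classical
  rw [projVert, gpLift_of]
  simp

theorem projVert_of_ne {u v : V} (h : u ≠ v) (x : G u) :
    projVert Γ G v (GraphProduct.of Γ G u x) = 1 := by
  classical
  rw [projVert, gpLift_of]
  rw [Pi.mulSingle_eq_of_ne h]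
  rfl

open Classical in
/-- Retraction onto the free product of the vertex groups of two non-adjacent vertices. -/
noncomputable def projPair (v w : V) (hvw : ¬ Γ.Adj v w) :
    GraphProduct Γ G →* CoprodI G :=
  gpLift Γ G (fun k => if k = v ∨ k = w then (CoprodI.of : G k →* CoprodI G) else 1) (by
    intro u u' hadj g h
    by_cases h1 : u = v ∨ u = w
    · have h2 : ¬ (u' = v ∨ u' = w) := by
        rintro (rfl | rfl)
        · rcases h1 with rfl | rfl
          · exact hadj.ne rfl
          · exact hvw (hadj.symm)
        · rcases h1 with rfl | rfl
          · exact hvw hadj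
          · exact hadj.ne rfl
      simp only [if_neg h2]
      exact Commute.one_right _
    · simp only [if_neg h1]
      exact Commute.one_left _)

theorem projPair_of_left (v w : V) (hvw : ¬ Γ.Adj v w) (x : G v) :
    projPair Γ G v w hvw (GraphProduct.of Γ G v x) = CoprodI.of x := by
  classical
  rw [projPair, gpLift_of, if_pos (Or.inl rfl)]

theorem projPair_of_right (v w : V) (hvw : ¬ Γ.Adj v w) (x : G w) :
    projPair Γ G v w hvw (GraphProduct.of Γ G w x) = CoprodI.of x := by
  classical
  rw [projPair, gpLift_of, if_pos (Or.inr rfl)]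

end AuxGraphProduct

/-- **Lemma.** If `Γ` is not the star of a vertex, an automorphism which is simultaneously
inner and local is the identity. -/
theorem inner_and_local_eq_id {V : Type} [Fintype V] (Γ : SimpleGraph V)
    (G : V → Type) [∀ v, Group (G v)] [∀ v, Nontrivial (G v)]
    (hΓ : ¬ ∃ u : V, ∀ v : V, v ∈ starSet Γ u)
    (φ : MulAut (GraphProduct Γ G))
    (hinner : ∃ g : GraphProduct Γ G, φ = MulAut.conj g)
    (hlocal : IsLocalAut Γ G φ) :
    φ = 1 := by
  classical
  obtain ⟨g, rfl⟩ := hinner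
  obtain ⟨σ, hσ⟩ := hlocal
  push_neg at hΓ
  -- Step 1: the graph automorphism is the identity.
  have hσid : ∀ v, σ v = v := by
    intro v
    by_contra hne
    obtain ⟨x, hx⟩ := exists_ne (1 : G v)
    have hmem : (MulAut.conj g) (GraphProduct.of Γ G v x) ∈ vertexSubgroup Γ G (σ v) := by
      rw [← hσ v]
      exact Subgroup.mem_map_of_mem _ ⟨x, rfl⟩
    obtain ⟨y, hy⟩ := hmem
    have h1 := congrArg (projVert Γ G v) hy
    rw [projVert_of_ne Γ G (Ne.symm (fun e => hne e.symm)) y] at h1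
    rw [MulAut.conj_apply, map_mul, map_mul, map_inv, projVert_of_same] at h1
    have : x = 1 := by
      have h2 := congrArg (fun z => (projVert Γ G v g)⁻¹ * z * projVert Γ G v g) h1
      simpa [mul_assoc] using h2.symm
    exact hx this
  -- Step 2: conjugation by g fixes each vertex group element.
  have hconj : ∀ (u : V) (a : G u), ∃ a' : G u,
      g * GraphProduct.of Γ G u a * g⁻¹ = GraphProduct.of Γ G u a' := by
    intro u a
    have hmem : (MulAut.conj g) (GraphProduct.of Γ G u a) ∈ vertexSubgroup Γ G u := by
      have := Subgroup.mem_map_of_mem (f := (MulAut.conj g).toMonoidHom)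
        (K := vertexSubgroup Γ G u) (⟨a, rfl⟩ : GraphProduct.of Γ G u a ∈ vertexSubgroup Γ G u)
      rw [hσ u, hσid u] at this
      exact this
    obtain ⟨a', ha'⟩ := hmem
    exact ⟨a', by rw [ha', MulAut.conj_apply]⟩
  have key : ∀ (v : V) (x : G v),
      g * GraphProduct.of Γ G v x * g⁻¹ = GraphProduct.of Γ G v x := by
    intro v x
    obtain ⟨w, hw⟩ := hΓ v
    have hwv : w ≠ v ∧ ¬ Γ.Adj v w := by simpa [starSet] using hw
    set p := projPair Γ G v w hwv.2 with hp
    have hy1 : p g = 1 := by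
      refine eq_one_of_normalizes_two (M := G) hwv.1.symm ?_ ?_
      · intro a
        obtain ⟨a', ha'⟩ := hconj v a
        refine ⟨a', ?_⟩
        have := congrArg p ha'
        rw [map_mul, map_mul, map_inv, projPair_of_left, projPair_of_left] at this
        exact this
      · intro b
        obtain ⟨b', hb'⟩ := hconj w b
        refine ⟨b', ?_⟩
        have := congrArg p hb'
        rw [map_mul, map_mul, map_inv, projPair_of_right, projPair_of_right] at this
        exact this
    obtain ⟨x', hx'⟩ := hconj v x
    have h1 := congrArg p hx'
    rw [map_mul, map_mul, map_inv, projPair_of_left, projPair_of_left, hy1] at h1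
    simp only [one_mul, inv_one, mul_one] at h1
    have hxx' : x = x' := Monoid.CoprodI.of_injective v h1
    rw [hx', ← hxx']
  -- Step 3: conclude.
  ext q
  show (MulAut.conj g) q = q
  obtain ⟨z, rfl⟩ := QuotientGroup.mk'_surjective
    (Subgroup.normalClosure (graphProductRels Γ G)) q
  induction z using Monoid.CoprodI.induction_on with
  | one => simp
  | of i m => simpa [MulAut.conj_apply, GraphProduct.of] using key i m
  | mul x y hx hy => rw [map_mul, map_mul, hx, hy]
end

section
/- Let Γ be a finite simplicial graph and 𝒢 = (G_v)_{v∈V} a family of nontrivial finite groups. Suppose Γ has a SIL: there are distinct non-adjacent vertices u, v and a connected component Λ of the subgraph induced on V ∖ (link(u) ∩ link(v)) containing neither u nor v. Let a ∈ Ĝ_u and b ∈ Ĝ_v be nontrivial. Then there exist automorphisms φ and ψ of Γ𝒢 such that φ(x) = a x a⁻¹ for all x ∈ Ĝ_w with w ∈ Λ and φ(x) = x for all x ∈ Ĝ_w with w ∉ Λ, and ψ(x) = b x b⁻¹ for all x ∈ Ĝ_w with w ∈ Λ and ψ(x) = x for all x ∈ Ĝ_w with w ∉ Λ; and for any such φ,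 ψ, the composite φ ∘ ψ has infinite order modulo inner automorphisms, i.e. (φ ∘ ψ)ⁿ is not an inner automorphism of Γ𝒢 for any n ≥ 1. -/
open scoped Pointwise

/-- `φ` conjugates the vertex groups of `Λ` by `c` and fixes the other vertex groups. -/
def PartConjBy {V : Type} (Γ : SimpleGraph V) (G : V → Type) [∀ v, Group (G v)]
    (Λ : Set V) (c : GraphProduct Γ G) (φ : MulAut (GraphProduct Γ G)) : Prop :=
  (∀ w ∈ Λ, ∀ x ∈ vertexSubgroup Γ G w, φ x = c * x * c⁻¹) ∧
  (∀ w, w ∉ Λ → ∀ x ∈ vertexSubgroup Γ G w, φ x = x)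
namespace SILAux

open Monoid

variable {V : Type} (Γ : SimpleGraph V) (G : V → Type) [∀ v, Group (G v)]

theorem of_commute {p q : V} (h : Γ.Adj p q) (g : G p) (x : G q) :
    Commute (GraphProduct.of Γ G p g) (GraphProduct.of Γ G q x) := by
  rw [← commutatorElement_eq_one_iff_commute, commutatorElement_def]
  have hmem : (CoprodI.of g * CoprodI.of x * (CoprodI.of g)⁻¹ * (CoprodI.of x)⁻¹ : CoprodI G)
      ∈ Subgroup.normalClosure (graphProductRels Γ G) :=
    Subgroup.subset_normalClosure ⟨p, q, g, x, h, rfl⟩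
  have h1 := (QuotientGroup.eq_one_iff _).2 hmem
  simpa [GraphProduct.of] using h1

/-- Universal property of the graph product. -/
def liftH {T : Type} [Group T] (f : ∀ v, G v →* T)
    (hf : ∀ p q, Γ.Adj p q → ∀ (g : G p) (x : G q), Commute (f p g) (f q x)) :
    GraphProduct Γ G →* T :=
  QuotientGroup.lift _ (CoprodI.lift f) (by
    intro y hy
    refine Subgroup.normalClosure_le_normal ?_ hy
    rintro z ⟨p, q, g, x, hpq, rfl⟩
    have h2 := commutatorElement_eq_one_iff_commute.2 (hf p q hpq g x)
    rw [commutatorElement_def] at h2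
    simpa [SetLike.mem_coe, MonoidHom.mem_ker] using h2)

@[simp] theorem liftH_of {T : Type} [Group T] (f : ∀ v, G v →* T) (hf) (v : V) (g : G v) :
    liftH Γ G f hf (GraphProduct.of Γ G v g) = f v g := by
  simp [liftH, GraphProduct.of]

theorem hom_ext {T : Type} [Group T] {f g : GraphProduct Γ G →* T}
    (h : ∀ v (x : G v), f (GraphProduct.of Γ G v x) = g (GraphProduct.of Γ G v x)) : f = g :=
  QuotientGroup.monoidHom_ext _ (CoprodI.ext_hom _ _ fun v => MonoidHom.ext fun x => h v x)

end SILAux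
namespace SILAux

open Monoid

variable {V : Type} (Γ : SimpleGraph V) (G : V → Type) [∀ v, Group (G v)]

variable {Γ G} in
/-- The partial conjugation homomorphism: conjugate vertex groups of `Λ` by `of u a₀`. -/
noncomputable def pcHom (u : V) (a₀ : G u) (Λ : Set V)
    (Hc : ∀ w ∈ Λ, ∀ y, y ∉ Λ → Γ.Adj w y → Γ.Adj u y) :
    GraphProduct Γ G →* GraphProduct Γ G := by
  classical
  exact liftH Γ G
    (fun w => if w ∈ Λ then
        (MulAut.conj (GraphProduct.of Γ G u a₀)).toMonoidHom.comp (GraphProduct.of Γ G w)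
      else GraphProduct.of Γ G w)
    (by
      intro p q hpq g x
      have base := of_commute Γ G hpq g x
      set c := GraphProduct.of Γ G u a₀ with hc
      by_cases hp : p ∈ Λ <;> by_cases hq : q ∈ Λ <;>
        simp only [if_pos, if_neg, hp, hq, if_true, if_false, MonoidHom.comp_apply,
          MulEquiv.coe_toMonoidHom, MulAut.conj_apply]
      · exact base.map (MulAut.conj c).toMonoidHom
      · have h1 := of_commute Γ G (Hc p hp q hq hpq) a₀ x
        exact (h1.mul_left base).mul_left h1.inv_left
      · have h1 := (of_commute Γ G (Hc q hq p hp hpq.symm) a₀ g).symm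
        exact (h1.mul_right base).mul_right h1.inv_right
      · exact base)

variable {Γ G}

theorem pcHom_of_mem {u : V} {a₀ : G u} {Λ : Set V} {Hc} {w : V} (hw : w ∈ Λ) (g : G w) :
    pcHom u a₀ Λ Hc (GraphProduct.of Γ G w g) =
      GraphProduct.of Γ G u a₀ * GraphProduct.of Γ G w g * (GraphProduct.of Γ G u a₀)⁻¹ := by
  classical
  simp [pcHom, liftH_of, if_pos hw]

theorem pcHom_of_not_mem {u : V} {a₀ : G u} {Λ : Set V} {Hc} {w : V} (hw : w ∉ Λ) (g : G w) :
    pcHom u a₀ Λ Hc (GraphProduct.of Γ G w g) = GraphProduct.of Γ G w g := by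
  classical
  simp [pcHom, liftH_of, if_neg hw]

theorem pcHom_comp_pcHom {u : V} {a₀ : G u} {Λ : Set V} {Hc} (hu : u ∉ Λ) :
    (pcHom u a₀ Λ Hc).comp (pcHom (Γ := Γ) (G := G) u a₀⁻¹ Λ Hc) = MonoidHom.id _ := by
  apply hom_ext
  intro w g
  by_cases hw : w ∈ Λ
  · simp only [MonoidHom.comp_apply, map_mul, map_inv, pcHom_of_mem hw,
      pcHom_of_not_mem hu, MonoidHom.id_apply]
    group
  · rw [MonoidHom.comp_apply, pcHom_of_not_mem hw, pcHom_of_not_mem hw, MonoidHom.id_apply]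

/-- The partial conjugation automorphism. -/
noncomputable def pcAut (u : V) (a₀ : G u) (Λ : Set V) (hu : u ∉ Λ)
    (Hc : ∀ w ∈ Λ, ∀ y, y ∉ Λ → Γ.Adj w y → Γ.Adj u y) : MulAut (GraphProduct Γ G) :=
  MonoidHom.toMulEquiv (pcHom u a₀ Λ Hc) (pcHom u a₀⁻¹ Λ Hc)
    (by simpa using pcHom_comp_pcHom (a₀ := a₀⁻¹) (Hc := Hc) hu)
    (pcHom_comp_pcHom hu)

theorem pcAut_of_mem {u : V} {a₀ : G u} {Λ : Set V} {hu : u ∉ Λ} {Hc} {w : V} (hw : w ∈ Λ)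
    (g : G w) : pcAut u a₀ Λ hu Hc (GraphProduct.of Γ G w g) =
      GraphProduct.of Γ G u a₀ * GraphProduct.of Γ G w g * (GraphProduct.of Γ G u a₀)⁻¹ :=
  pcHom_of_mem (Hc := Hc) hw g

theorem pcAut_of_not_mem {u : V} {a₀ : G u} {Λ : Set V} {hu : u ∉ Λ} {Hc} {w : V} (hw : w ∉ Λ)
    (g : G w) : pcAut u a₀ Λ hu Hc (GraphProduct.of Γ G w g) = GraphProduct.of Γ G w g :=
  pcHom_of_not_mem (Hc := Hc) hw g

theorem pcAut_partConjBy {u : V} {a₀ : G u} {Λ : Set V} {hu : u ∉ Λ} {Hc} :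
    PartConjBy Γ G Λ (GraphProduct.of Γ G u a₀) (pcAut u a₀ Λ hu Hc) := by
  constructor
  · rintro w hw x ⟨g, rfl⟩
    exact pcAut_of_mem hw g
  · rintro w hw x ⟨g, rfl⟩
    exact pcAut_of_not_mem hw g

end SILAux
namespace SILAux

open Monoid Monoid.CoprodI

variable {F : Bool → Type} [∀ i, Group (F i)]

/-- Product of a list of letters. -/
def prodList (L : List (Σ i, F i)) : CoprodI F := (L.map fun l => CoprodI.of l.2).prod

theorem word_prod_eq (w : Word F) : w.prod = prodList w.toList := rfl

theorem prodList_append (L₁ L₂ : List (Σ i, F i)) :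
    prodList (L₁ ++ L₂) = prodList L₁ * prodList L₂ := by
  simp [prodList]

theorem prodList_cons (l : (Σ i, F i)) (L : List (Σ i, F i)) :
    prodList (l :: L) = CoprodI.of l.2 * prodList L := by
  simp [prodList]

theorem prod_inj {w₁ w₂ : Word F} (h : w₁.prod = w₂.prod) : w₁ = w₂ := by
  letI : ∀ i, DecidableEq (F i) := fun _ => Classical.decEq _
  exact (Word.equiv (M := F)).symm.injective h

/-- If `g` commutes with a nontrivial element of the summand `F i`, then any reduced word
for `g` starts with a letter of `F i`. -/
theorem head_idx_eq {i : Bool} {a : F i} (ha : a ≠ 1) {w : Word F}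
    (hc : CoprodI.of a * w.prod * (CoprodI.of a)⁻¹ = w.prod) :
    ∀ l ∈ w.toList.head?, l.1 = i := by
  intro l₀ hl₀
  by_contra hne
  rw [Option.mem_def] at hl₀
  have hLnil : w.toList ≠ [] := by intro h; rw [h] at hl₀; simp at hl₀
  rcases (List.eq_nil_or_concat w.toList) with h | ⟨L', m, hL⟩
  · exact hLnil h
  rw [List.concat_eq_append] at hL
  have hchain := w.chain_ne
  by_cases hmi : m.1 = i
  · -- last letter in `F i`
    obtain ⟨j, β⟩ := m
    dsimp at hmi
    subst hmi
    have hL'nil : L' ≠ [] := by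
      intro h
      rw [h, List.nil_append] at hL
      rw [hL] at hl₀
      simp at hl₀
      exact hne (congrArg Sigma.fst hl₀.symm)
    rw [hL, List.isChain_append] at hchain
    have hlast' : ∀ y ∈ L'.getLast?, y.1 ≠ j := fun y hy => hchain.2.2 y hy ⟨j, β⟩ rfl
    have hhead' : L'.head? = some l₀ := by
      rw [hL, List.head?_append_of_ne_nil _ hL'nil] at hl₀
      exact hl₀
    have hβ1 : β ≠ 1 := w.ne_one ⟨j, β⟩ (by rw [hL]; simp)
    have hprodw : w.prod = prodList L' * CoprodI.of β := by
      rw [word_prod_eq, hL, prodList_append, prodList_cons]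
      simp [prodList]
    have hkey : CoprodI.of a * w.prod * (CoprodI.of a)⁻¹
        = prodList (⟨j, a⟩ :: L') * CoprodI.of (β * a⁻¹) := by
      rw [hprodw, prodList_cons, map_mul, map_inv]
      group
    by_cases hβa : β * a⁻¹ = 1
    · -- the conjugate has word `⟨j,a⟩ :: L'`
      have hn1 : ∀ l ∈ (⟨j, a⟩ :: L' : List (Σ i, F i)), l.2 ≠ 1 := by
        intro l hl
        rcases List.mem_cons.1 hl with rfl | hl
        · exact ha
        · exact w.ne_one l (by rw [hL]; exact List.mem_append_left _ hl)
      have hch : List.IsChain (fun l l' : Σ i, F i => l.1 ≠ l'.1) (⟨j, a⟩ :: L') := by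
        rw [List.isChain_cons]
        refine ⟨?_, hchain.1⟩
        intro y hy
        rw [hhead'] at hy
        cases hy
        exact fun h => hne h.symm
      have hW : (⟨⟨j, a⟩ :: L', hn1, hch⟩ : Word F).prod = w.prod := by
        rw [word_prod_eq, ← hc, hkey, hβa, map_one, mul_one]
      have hlist := congrArg Word.toList (prod_inj hW)
      simp only at hlist
      rw [← hlist] at hl₀
      simp only [List.head?_cons, Option.some.injEq] at hl₀
      exact hne (congrArg Sigma.fst hl₀.symm)
    · -- the conjugate has a longer word
      have hn1 : ∀ l ∈ (⟨j, a⟩ :: (L' ++ [⟨j, β * a⁻¹⟩]) : List (Σ i, F i)), l.2 ≠ 1 := by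
        intro l hl
        rcases List.mem_cons.1 hl with rfl | hl
        · exact ha
        rcases List.mem_append.1 hl with hl | hl
        · exact w.ne_one l (by rw [hL]; exact List.mem_append_left _ hl)
        · rw [List.mem_singleton] at hl
          subst hl
          exact hβa
      have hch : List.IsChain (fun l l' : Σ i, F i => l.1 ≠ l'.1)
          (⟨j, a⟩ :: (L' ++ [⟨j, β * a⁻¹⟩])) := by
        rw [List.isChain_cons]
        constructor
        · intro y hy
          rw [List.head?_append_of_ne_nil _ hL'nil, hhead'] at hy
          cases hy
          exact fun h => hne h.symm
        · rw [List.isChain_append]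
          exact ⟨hchain.1, List.isChain_singleton _,
            fun y hy z hz => by cases hz; exact hlast' y hy⟩
      have hW : (⟨⟨j, a⟩ :: (L' ++ [⟨j, β * a⁻¹⟩]), hn1, hch⟩ : Word F).prod = w.prod := by
        rw [word_prod_eq, ← hc, hkey]
        simp [prodList_cons, prodList_append, prodList, mul_assoc]
      have := congrArg (fun u => u.toList.length) (prod_inj hW)
      simp only [hL, List.length_cons, List.length_append, List.length_singleton] at this
      omega
  · -- last letter not in `F i`: conjugating gives a word longer by 2
    have hn1 : ∀ l ∈ (⟨i, a⟩ :: (w.toList ++ [⟨i, a⁻¹⟩]) : List (Σ i, F i)), l.2 ≠ 1 := by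
      intro l hl
      rcases List.mem_cons.1 hl with rfl | hl
      · exact ha
      rcases List.mem_append.1 hl with hl | hl
      · exact w.ne_one l hl
      · rw [List.mem_singleton] at hl
        subst hl
        exact inv_ne_one.2 ha
    have hch : List.IsChain (fun l l' : Σ i, F i => l.1 ≠ l'.1)
        (⟨i, a⟩ :: (w.toList ++ [⟨i, a⁻¹⟩])) := by
      rw [List.isChain_cons]
      constructor
      · intro y hy
        rw [List.head?_append_of_ne_nil _ hLnil, hl₀] at hy
        cases hy
        exact fun h => hne h.symm
      · rw [List.isChain_append]
        refine ⟨w.chain_ne, List.isChain_singleton _, fun y hy z hz => ?_⟩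
        cases hz
        rw [hL, List.getLast?_concat] at hy
        cases hy
        exact fun h => hmi h
    have hW : (⟨⟨i, a⟩ :: (w.toList ++ [⟨i, a⁻¹⟩]), hn1, hch⟩ : Word F).prod = w.prod := by
      rw [word_prod_eq, ← hc]
      simp [prodList_cons, prodList_append, prodList, word_prod_eq, mul_assoc]
    have := congrArg (fun u => u.toList.length) (prod_inj hW)
    simp only [List.length_cons, List.length_append, List.length_singleton] at this
    omega

/-- An element commuting with nontrivial elements of both summands is trivial. -/
theorem eq_one_of_commutes {a : F false} {b : F true} (ha : a ≠ 1) (hb : b ≠ 1)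
    {g : CoprodI F} (hca : CoprodI.of a * g * (CoprodI.of a)⁻¹ = g)
    (hcb : CoprodI.of b * g * (CoprodI.of b)⁻¹ = g) : g = 1 := by
  letI : ∀ i, DecidableEq (F i) := fun _ => Classical.decEq _
  set w : Word F := Word.equiv g with hw
  have hprod : w.prod = g := (Word.equiv (M := F)).symm_apply_apply g
  rw [← hprod] at hca hcb
  have h1 := head_idx_eq ha hca
  have h2 := head_idx_eq hb hcb
  cases hh : w.toList.head? with
  | some l =>
      have e1 := h1 l (by rw [hh]; rfl)
      have e2 := h2 l (by rw [hh]; rfl)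
      rw [e1] at e2
      cases e2
  | none =>
      have : w.toList = [] := by
        cases hl : w.toList
        · rfl
        · rw [hl] at hh; simp at hh
      rw [← hprod, word_prod_eq, this]
      rfl

end SILAux
namespace SILAux

set_option linter.unusedSectionVars false

open Monoid Monoid.CoprodI

variable {F : Bool → Type} [∀ i, Group (F i)]

variable (a : F false) (b x : F true)

/-- The alternating list representing `(of b * of a) ^ n`. -/
def cList : ℕ → List (Σ i, F i)
  | 0 => []
  | n + 1 => ⟨true, b⟩ :: ⟨false, a⟩ :: cList n

/-- The list representing `of a * (of b * of a) ^ k * of x`. -/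
def jList : ℕ → List (Σ i, F i)
  | 0 => [⟨false, a⟩, ⟨true, x⟩]
  | k + 1 => ⟨false, a⟩ :: ⟨true, b⟩ :: jList k

theorem cList_length (n : ℕ) : (cList a b n).length = 2 * n := by
  induction n with
  | zero => rfl
  | succ n ih => simp [cList, ih]; omega

theorem jList_length (k : ℕ) : (jList a b x k).length = 2 * k + 2 := by
  induction k with
  | zero => rfl
  | succ k ih => simp [jList, ih]; omega

theorem cList_head (n : ℕ) (hn : n ≠ 0) : (cList a b n).head? = some ⟨true, b⟩ := by
  cases n with
  | zero => exact absurd rfl hn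
  | succ n => rfl

theorem jList_head (k : ℕ) : (jList a b x k).head? = some ⟨false, a⟩ := by
  cases k <;> rfl

theorem cList_mem (n : ℕ) : ∀ l ∈ cList a b n,
    l = (⟨true, b⟩ : Σ i, F i) ∨ l = (⟨false, a⟩ : Σ i, F i) := by
  induction n with
  | zero => intro l hl; cases hl
  | succ n ih =>
      intro l hl
      rcases List.mem_cons.1 hl with rfl | hl
      · exact Or.inl rfl
      rcases List.mem_cons.1 hl with rfl | hl
      · exact Or.inr rfl
      · exact ih l hl

theorem jList_mem (k : ℕ) : ∀ l ∈ jList a b x k,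
    l = (⟨true, b⟩ : Σ i, F i) ∨ l = (⟨false, a⟩ : Σ i, F i) ∨ l = (⟨true, x⟩ : Σ i, F i) := by
  induction k with
  | zero =>
      intro l hl
      rcases List.mem_cons.1 hl with rfl | hl
      · exact Or.inr (Or.inl rfl)
      rw [List.mem_singleton] at hl
      subst hl
      exact Or.inr (Or.inr rfl)
  | succ k ih =>
      intro l hl
      rcases List.mem_cons.1 hl with rfl | hl
      · exact Or.inr (Or.inl rfl)
      rcases List.mem_cons.1 hl with rfl | hl
      · exact Or.inl rfl
      · exact ih l hl

theorem cList_chain (n : ℕ) :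
    List.IsChain (fun l l' : Σ i, F i => l.1 ≠ l'.1) (cList a b n) := by
  induction n with
  | zero => exact List.isChain_nil
  | succ n ih =>
      rw [cList, List.isChain_cons_cons, List.isChain_cons]
      refine ⟨by simp, fun y hy => ?_, ih⟩
      cases n with
      | zero => simp [cList] at hy
      | succ n =>
          rw [cList_head a b _ (Nat.succ_ne_zero n)] at hy
          cases hy
          simp

theorem jList_chain (k : ℕ) :
    List.IsChain (fun l l' : Σ i, F i => l.1 ≠ l'.1) (jList a b x k) := by
  induction k with
  | zero => simp [jList]
  | succ k ih =>
      rw [jList, List.isChain_cons_cons, List.isChain_cons]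
      refine ⟨by simp, fun y hy => ?_, ih⟩
      rw [jList_head a b x k] at hy
      cases hy
      simp

theorem cList_prod (n : ℕ) :
    prodList (cList a b n) = (CoprodI.of b * CoprodI.of a) ^ n := by
  induction n with
  | zero => rfl
  | succ n ih =>
      rw [cList, prodList_cons, prodList_cons, ih, pow_succ']
      simp [mul_assoc]

theorem jList_prod (k : ℕ) :
    prodList (jList a b x k)
      = CoprodI.of a * (CoprodI.of b * CoprodI.of a) ^ k * CoprodI.of x := by
  induction k with
  | zero => simp [jList, prodList]
  | succ k ih =>
      rw [jList, prodList_cons, prodList_cons, ih, pow_succ']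
      simp [mul_assoc]

/-- `(of b * of a) ^ n` is not centralized by `of x` when everything is suitably nontrivial. -/
theorem pow_not_commute (ha : a ≠ 1) (hb : b ≠ 1) (hx : x ≠ 1) (hxb : x⁻¹ * b ≠ 1)
    {n : ℕ} (hn : 1 ≤ n) :
    (CoprodI.of x)⁻¹ * (CoprodI.of b * CoprodI.of a) ^ n * CoprodI.of x
      ≠ (CoprodI.of b * CoprodI.of a) ^ n := by
  intro heq
  obtain ⟨k, rfl⟩ : ∃ k, n = k + 1 := ⟨n - 1, by omega⟩
  have hn1c : ∀ l ∈ cList a b (k+1), l.2 ≠ 1 := by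
    intro l hl
    rcases cList_mem a b (k+1) l hl with rfl | rfl
    · exact hb
    · exact ha
  have hn1m : ∀ l ∈ (⟨true, x⁻¹ * b⟩ :: jList a b x k : List (Σ i, F i)), l.2 ≠ 1 := by
    intro l hl
    rcases List.mem_cons.1 hl with rfl | hl
    · exact hxb
    rcases jList_mem a b x k l hl with rfl | rfl | rfl
    · exact hb
    · exact ha
    · exact hx
  have hchm : List.IsChain (fun l l' : Σ i, F i => l.1 ≠ l'.1)
      (⟨true, x⁻¹ * b⟩ :: jList a b x k) := by
    rw [List.isChain_cons]
    refine ⟨fun y hy => ?_, jList_chain a b x k⟩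
    rw [jList_head a b x k] at hy
    cases hy
    simp
  have hW : (⟨⟨true, x⁻¹ * b⟩ :: jList a b x k, hn1m, hchm⟩ : Word F).prod
      = (⟨cList a b (k+1), hn1c, cList_chain a b (k+1)⟩ : Word F).prod := by
    rw [word_prod_eq, word_prod_eq]
    simp only [prodList_cons, jList_prod, cList_prod]
    rw [← heq, map_mul, map_inv, pow_succ']
    simp [mul_assoc]
  have := congrArg (fun u => u.toList.length) (prod_inj hW)
  simp only [List.length_cons, cList_length, jList_length] at this
  omega

end SILAux
namespace SILAux

set_option linter.unusedSectionVars false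

open Monoid

section Core

variable {V : Type} (Γ : SimpleGraph V) (G : V → Type) [∀ v, Group (G v)]
variable (u v w₀ : V) [DecidableEq V]

/-- The two-factor family `G u` and `G v × G w₀`. -/
def Fam : Bool → Type := fun i => match i with
  | false => G u
  | true => G v × G w₀

instance : ∀ i, Group (Fam G u v w₀ i) := fun i => match i with
  | false => inferInstanceAs (Group (G u))
  | true => inferInstanceAs (Group (G v × G w₀))

/-- The inclusion of `G u` in the free product. -/
noncomputable def ofU : G u →* CoprodI (Fam G u v w₀) :=
  CoprodI.of (M := Fam G u v w₀) (i := false)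

/-- The inclusion of `G v × G w₀` in the free product. -/
noncomputable def ofVW : (G v × G w₀) →* CoprodI (Fam G u v w₀) :=
  CoprodI.of (M := Fam G u v w₀) (i := true)

/-- Transport of vertex groups along an equality of vertices. -/
def castHom {x y : V} (h : x = y) : G x →* G y :=
  @Eq.rec V x (fun y _ => G x →* G y) (MonoidHom.id (G x)) y h

/-- The vertexwise components of the retraction. -/
noncomputable def fmap (x : V) : G x →* CoprodI (Fam G u v w₀) :=
  if h : x = u then (ofU G u v w₀).comp (castHom G h)
  else if h : x = v then
    ((ofVW G u v w₀).comp (MonoidHom.inl (G v) (G w₀))).comp (castHom G h)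
  else if h : x = w₀ then
    ((ofVW G u v w₀).comp (MonoidHom.inr (G v) (G w₀))).comp (castHom G h)
  else 1

theorem fmap_u : fmap G u v w₀ u = ofU G u v w₀ := by
  unfold fmap
  rw [dif_pos rfl]
  rfl

theorem fmap_v (huv : u ≠ v) :
    fmap G u v w₀ v = (ofVW G u v w₀).comp (MonoidHom.inl (G v) (G w₀)) := by
  unfold fmap
  rw [dif_neg huv.symm, dif_pos rfl]
  rfl

theorem fmap_w (huw : u ≠ w₀) (hvw : v ≠ w₀) :
    fmap G u v w₀ w₀ = (ofVW G u v w₀).comp (MonoidHom.inr (G v) (G w₀)) := by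
  unfold fmap
  rw [dif_neg huw.symm, dif_neg hvw.symm, dif_pos rfl]
  rfl

theorem fmap_other (x : V) (h1 : x ≠ u) (h2 : x ≠ v) (h3 : x ≠ w₀) :
    fmap G u v w₀ x = 1 := by
  unfold fmap
  rw [dif_neg h1, dif_neg h2, dif_neg h3]

/-- The retraction of the graph product onto the free product `G u * (G v × G w₀)`. -/
noncomputable def rho (hadj_uv : ¬ Γ.Adj u v) (hadj_uw : ¬ Γ.Adj u w₀)
    (huv : u ≠ v) (huw : u ≠ w₀) (hvw : v ≠ w₀) :
    GraphProduct Γ G →* CoprodI (Fam G u v w₀) := by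
  refine liftH Γ G (fmap G u v w₀) ?_
  intro p q hpq g x
  rcases eq_or_ne u p with rfl | hpu
  · rcases eq_or_ne u q with rfl | hqu
    · exact (Γ.loopless.irrefl _ hpq).elim
    rcases eq_or_ne v q with rfl | hqv
    · exact absurd hpq hadj_uv
    rcases eq_or_ne w₀ q with rfl | hqw
    · exact absurd hpq hadj_uw
    · rw [fmap_other G u v w₀ q hqu.symm hqv.symm hqw.symm]
      simp only [MonoidHom.one_apply]
      exact Commute.one_right _
  rcases eq_or_ne v p with rfl | hpv
  · rcases eq_or_ne u q with rfl | hqu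
    · exact absurd hpq.symm hadj_uv
    rcases eq_or_ne v q with rfl | hqv
    · exact (Γ.loopless.irrefl _ hpq).elim
    rcases eq_or_ne w₀ q with rfl | hqw
    · rw [fmap_v G u v w₀ huv, fmap_w G u v w₀ huw hvw]
      simp only [MonoidHom.comp_apply, MonoidHom.inl_apply, MonoidHom.inr_apply]
      exact Commute.map
        (show ((g, 1) : G v × G w₀) * (1, x) = (1, x) * (g, 1) from by
          simp [Prod.ext_iff]) (ofVW G u v w₀)
    · rw [fmap_other G u v w₀ q hqu.symm hqv.symm hqw.symm]
      simp only [MonoidHom.one_apply]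
      exact Commute.one_right _
  rcases eq_or_ne w₀ p with rfl | hpw
  · rcases eq_or_ne u q with rfl | hqu
    · exact absurd hpq.symm hadj_uw
    rcases eq_or_ne v q with rfl | hqv
    · rw [fmap_v G u v w₀ huv, fmap_w G u v w₀ huw hvw]
      simp only [MonoidHom.comp_apply, MonoidHom.inl_apply, MonoidHom.inr_apply]
      exact Commute.map
        (show ((1, g) : G v × G w₀) * (x, 1) = (x, 1) * (1, g) from by
          simp [Prod.ext_iff]) (ofVW G u v w₀)
    rcases eq_or_ne w₀ q with rfl | hqw
    · exact (Γ.loopless.irrefl _ hpq).elim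
    · rw [fmap_other G u v w₀ q hqu.symm hqv.symm hqw.symm]
      simp only [MonoidHom.one_apply]
      exact Commute.one_right _
  · rw [fmap_other G u v w₀ p hpu.symm hpv.symm hpw.symm]
    simp only [MonoidHom.one_apply]
    exact Commute.one_left _

theorem rho_u {hadj_uv hadj_uw huv huw hvw} (g : G u) :
    rho Γ G u v w₀ hadj_uv hadj_uw huv huw hvw (GraphProduct.of Γ G u g)
      = ofU G u v w₀ g := by
  rw [rho, liftH_of, fmap_u]

theorem rho_v {hadj_uv hadj_uw huv huw hvw} (g : G v) :
    rho Γ G u v w₀ hadj_uv hadj_uw huv huw hvw (GraphProduct.of Γ G v g)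
      = ofVW G u v w₀ (g, 1) := by
  rw [rho, liftH_of, fmap_v G u v w₀ huv]
  rfl

theorem rho_w {hadj_uv hadj_uw huv huw hvw} (g : G w₀) :
    rho Γ G u v w₀ hadj_uv hadj_uw huv huw hvw (GraphProduct.of Γ G w₀ g)
      = ofVW G u v w₀ (1, g) := by
  rw [rho, liftH_of, fmap_w G u v w₀ huw hvw]
  rfl

end Core

end SILAux
namespace SILAux

open Monoid

theorem mem_vertexSubgroup {V : Type} (Γ : SimpleGraph V) (G : V → Type) [∀ v, Group (G v)]
    {w : V} (g : G w) : GraphProduct.of Γ G w g ∈ vertexSubgroup Γ G w := ⟨g, rfl⟩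

theorem core {V : Type} (Γ : SimpleGraph V) (G : V → Type) [∀ v, Group (G v)]
    [∀ v, Nontrivial (G v)]
    (u v : V) (huv : u ≠ v) (hadj : ¬ Γ.Adj u v) (Λ : Set V) (hu : u ∉ Λ) (hv : v ∉ Λ)
    (w₀ : V) (hw₀ : w₀ ∈ Λ) (hw₀u : ¬ Γ.Adj u w₀)
    (a b : GraphProduct Γ G)
    (ha : a ∈ vertexSubgroup Γ G u) (ha1 : a ≠ 1)
    (hb : b ∈ vertexSubgroup Γ G v) (hb1 : b ≠ 1)
    (φ ψ : MulAut (GraphProduct Γ G))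
    (hφ : PartConjBy Γ G Λ a φ) (hψ : PartConjBy Γ G Λ b ψ)
    (n : ℕ) (hn : 1 ≤ n) :
    ¬ ∃ g : GraphProduct Γ G, (φ * ψ) ^ n = MulAut.conj g := by
  letI : DecidableEq V := Classical.decEq V
  rintro ⟨g, hg⟩
  have ha' : a ∈ (GraphProduct.of Γ G u).range := ha
  have hb' : b ∈ (GraphProduct.of Γ G v).range := hb
  obtain ⟨a₀, rfl⟩ := MonoidHom.mem_range.mp ha'
  obtain ⟨b₀, rfl⟩ := MonoidHom.mem_range.mp hb'
  set oA := GraphProduct.of Γ G u a₀ with hoA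
  set oB := GraphProduct.of Γ G v b₀ with hoB
  have huw : u ≠ w₀ := by rintro rfl; exact hu hw₀
  have hvw : v ≠ w₀ := by rintro rfl; exact hv hw₀
  have ha₀ : a₀ ≠ 1 := by rintro rfl; rw [hoA, map_one] at ha1; exact ha1 rfl
  have hb₀ : b₀ ≠ 1 := by rintro rfl; rw [hoB, map_one] at hb1; exact hb1 rfl
  obtain ⟨x₀, hx₀⟩ := exists_ne (1 : G w₀)
  set oX := GraphProduct.of Γ G w₀ x₀ with hoX
  set σ := φ * ψ with hσ
  -- fixed points of σ
  have hσa : σ oA = oA := by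
    rw [hσ, MulAut.mul_apply, hψ.2 u hu oA (mem_vertexSubgroup Γ G a₀),
      hφ.2 u hu oA (mem_vertexSubgroup Γ G a₀)]
  have hσb : σ oB = oB := by
    rw [hσ, MulAut.mul_apply, hψ.2 v hv oB (mem_vertexSubgroup Γ G b₀),
      hφ.2 v hv oB (mem_vertexSubgroup Γ G b₀)]
  set c := oB * oA with hc
  have hσba : σ c = c := by rw [hc, map_mul, hσa, hσb]
  have hσX : σ oX = c * oX * c⁻¹ := by
    rw [hc]
    rw [hσ, MulAut.mul_apply, hψ.1 w₀ hw₀ oX (mem_vertexSubgroup Γ G x₀), map_mul, map_mul,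
      map_inv, hφ.2 v hv oB (mem_vertexSubgroup Γ G b₀), hφ.1 w₀ hw₀ oX (mem_vertexSubgroup Γ G x₀)]
    group
  have hpow_fix : ∀ (m : ℕ) (x : GraphProduct Γ G), σ x = x → (σ ^ m) x = x := by
    intro m x hx
    induction m with
    | zero => rfl
    | succ m ih => rw [pow_succ, MulAut.mul_apply, hx, ih]
  have hpow_X : ∀ m : ℕ, (σ ^ m) oX = c ^ m * oX * (c ^ m)⁻¹ := by
    intro m
    induction m with
    | zero => simp
    | succ m ih =>
        rw [pow_succ', MulAut.mul_apply, ih, map_mul, map_mul, map_inv, map_pow, hσba, hσX,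
          pow_succ']
        group
  have happ : ∀ x : GraphProduct Γ G, (σ ^ n) x = g * x * g⁻¹ := by
    intro x
    rw [hg, MulAut.conj_apply]
  have E1 : g * oA * g⁻¹ = oA := by rw [← happ oA, hpow_fix n oA hσa]
  have E2 : g * oB * g⁻¹ = oB := by rw [← happ oB, hpow_fix n oB hσb]
  have E3 : g * oX * g⁻¹ = c ^ n * oX * (c ^ n)⁻¹ := by
    rw [← happ oX, hpow_X n]
  -- push to the free product
  set ρ := rho Γ G u v w₀ hadj hw₀u huv huw hvw with hρ
  set g₁ := ρ g with hg₁
  set A : CoprodI (Fam G u v w₀) := CoprodI.of (M := Fam G u v w₀) (i := false) a₀ with hA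
  set B : CoprodI (Fam G u v w₀) :=
    CoprodI.of (M := Fam G u v w₀) (i := true) ((b₀, 1) : G v × G w₀) with hB
  set X : CoprodI (Fam G u v w₀) :=
    CoprodI.of (M := Fam G u v w₀) (i := true) ((1, x₀) : G v × G w₀) with hX
  have rA : ρ oA = A := rho_u Γ G u v w₀ a₀
  have rB : ρ oB = B := rho_v Γ G u v w₀ b₀
  have rX : ρ oX = X := rho_w Γ G u v w₀ x₀
  have F1 : A * g₁ * A⁻¹ = g₁ := by
    have := congrArg ρ E1
    simp only [map_mul, map_inv, rA, ← hg₁] at this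
    have h2 : g₁ * A = A * g₁ := by
      conv_rhs => rw [← this]
      group
    rw [← h2]
    group
  have F2 : B * g₁ * B⁻¹ = g₁ := by
    have := congrArg ρ E2
    simp only [map_mul, map_inv, rB, ← hg₁] at this
    have h2 : g₁ * B = B * g₁ := by
      conv_rhs => rw [← this]
      group
    rw [← h2]
    group
  have hg₁1 : g₁ = 1 :=
    eq_one_of_commutes (F := Fam G u v w₀) ha₀
      (show ((b₀, 1) : G v × G w₀) ≠ 1 from by simp [Prod.ext_iff, hb₀]) F1 F2
  have rC : ρ c = B * A := by rw [hc, map_mul, rA, rB]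
  have F3 : X = (B * A) ^ n * X * ((B * A) ^ n)⁻¹ := by
    have := congrArg ρ E3
    simp only [map_mul, map_inv, map_pow, rC, rX, ← hg₁, hg₁1] at this
    simpa using this
  have hB1 : ((b₀, 1) : G v × G w₀) ≠ 1 := by simp [Prod.ext_iff, hb₀]
  have hX1 : ((1, x₀) : G v × G w₀) ≠ 1 := by simp [Prod.ext_iff, hx₀]
  have hXB : ((1, x₀) : G v × G w₀)⁻¹ * (b₀, 1) ≠ 1 := by
    intro h
    rw [Prod.ext_iff] at h
    simp at h
    exact hb₀ h.1
  refine pow_not_commute (F := Fam G u v w₀) a₀ ((b₀, 1) : G v × G w₀) ((1, x₀) : G v × G w₀)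
    ha₀ hB1 hX1 hXB hn ?_ |>.elim
  show X⁻¹ * (B * A) ^ n * X = (B * A) ^ n
  calc X⁻¹ * (B * A) ^ n * X
      = X⁻¹ * ((B * A) ^ n * X * ((B * A) ^ n)⁻¹) * (B * A) ^ n := by group
    _ = X⁻¹ * X * (B * A) ^ n := by rw [← F3]
    _ = (B * A) ^ n := by group
end SILAux
/-- **Proposition.** If `Γ` has a SIL witnessed by `u`, `v`, `Λ`, then the two associated
partial conjugations exist, and their composite has infinite order modulo inner
automorphisms. -/
theorem SIL_gives_infinite_order_outer {V : Type} [Fintype V]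
    (Γ : SimpleGraph V) (G : V → Type) [∀ v, Group (G v)] [∀ v, Nontrivial (G v)]
    [∀ v, Finite (G v)]
    (u v : V) (huv : u ≠ v) (hadj : ¬ Γ.Adj u v) (Λ : Set V)
    (hΛ : IsConnCompOf Γ {w | ¬ (Γ.Adj u w ∧ Γ.Adj v w)} Λ) (hu : u ∉ Λ) (hv : v ∉ Λ)
    (a b : GraphProduct Γ G)
    (ha : a ∈ vertexSubgroup Γ G u) (ha1 : a ≠ 1)
    (hb : b ∈ vertexSubgroup Γ G v) (hb1 : b ≠ 1) :
    (∃ φ ψ : MulAut (GraphProduct Γ G), PartConjBy Γ G Λ a φ ∧ PartConjBy Γ G Λ b ψ) ∧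
    (∀ φ ψ : MulAut (GraphProduct Γ G), PartConjBy Γ G Λ a φ → PartConjBy Γ G Λ b ψ →
      ∀ n : ℕ, 1 ≤ n → ¬ ∃ g : GraphProduct Γ G, (φ * ψ) ^ n = MulAut.conj g) := by
  classical
  have ha' : a ∈ (GraphProduct.of Γ G u).range := ha
  have hb' : b ∈ (GraphProduct.of Γ G v).range := hb
  obtain ⟨a₀, ha₀⟩ := MonoidHom.mem_range.mp ha'
  obtain ⟨b₀, hb₀⟩ := MonoidHom.mem_range.mp hb'
  have Hcu : ∀ w ∈ Λ, ∀ y, y ∉ Λ → Γ.Adj w y → Γ.Adj u y := by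
    intro w hw y hy hadj'
    have hyS : y ∉ {w | ¬ (Γ.Adj u w ∧ Γ.Adj v w)} :=
      fun hS => hy (hΛ.2.2.2 w hw y hS hadj')
    simp only [Set.mem_setOf_eq, not_not] at hyS
    exact hyS.1
  have Hcv : ∀ w ∈ Λ, ∀ y, y ∉ Λ → Γ.Adj w y → Γ.Adj v y := by
    intro w hw y hy hadj'
    have hyS : y ∉ {w | ¬ (Γ.Adj u w ∧ Γ.Adj v w)} :=
      fun hS => hy (hΛ.2.2.2 w hw y hS hadj')
    simp only [Set.mem_setOf_eq, not_not] at hyS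
    exact hyS.2
  constructor
  · exact ⟨SILAux.pcAut u a₀ Λ hu Hcu, SILAux.pcAut v b₀ Λ hv Hcv,
      ha₀ ▸ SILAux.pcAut_partConjBy, hb₀ ▸ SILAux.pcAut_partConjBy⟩
  · intro φ ψ hφ hψ n hn
    obtain ⟨w₀, hw₀⟩ := hΛ.1
    have hS : ¬ (Γ.Adj u w₀ ∧ Γ.Adj v w₀) := hΛ.2.1 hw₀
    by_cases hAu : Γ.Adj u w₀
    · -- `w₀` is not adjacent to `v`: swap the roles of `u` and `v`
      have hAv : ¬ Γ.Adj v w₀ := fun h => hS ⟨hAu, h⟩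
      rintro ⟨g, hg⟩
      have hsemi : SemiconjBy ψ (φ * ψ) (ψ * φ) := (mul_assoc ψ φ ψ).symm
      have hpow := hsemi.pow_right n
      have h1 : (ψ * φ) ^ n = ψ * (φ * ψ) ^ n * ψ⁻¹ :=
        eq_mul_inv_iff_mul_eq.2 hpow.eq.symm
      rw [hg] at h1
      have h2 : ψ * MulAut.conj g * ψ⁻¹ = MulAut.conj (ψ g) := by
        apply MulEquiv.ext
        intro x
        simp only [MulAut.mul_apply, MulAut.conj_apply, map_mul, map_inv,
          MulAut.apply_inv_self]
      rw [h2] at h1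
      exact SILAux.core Γ G v u huv.symm (fun h => hadj h.symm) Λ hv hu w₀ hw₀ hAv
        b a hb hb1 ha ha1 ψ φ hψ hφ n hn ⟨ψ g, h1⟩
    · exact SILAux.core Γ G u v huv hadj Λ hu hv w₀ hw₀ hAu
        a b ha ha1 hb hb1 φ ψ hφ hψ n hn
end

section
/- Let Γ be a finite simplicial graph and 𝒢 = (G_v)_{v∈V} a family of nontrivial groups. Let Λ₁, Λ₂ ⊆ V and g ∈ Γ𝒢. If ⟨Λ₁⟩ ⊆ g ⟨Λ₂⟩ g⁻¹, then Λ₁ ⊆ Λ₂ and g belongs to the set product ⟨Λ₁⟩ · ⟨link(Λ₁)⟩ · ⟨Λ₂⟩, where link(Λ₁) = {w ∈ V : w is adjacent to every vertex of Λ₁}. -/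
open scoped Pointwise

set_option linter.unusedSectionVars false

namespace GPAux

open Monoid List

open scoped Classical

variable {V : Type} (Γ : SimpleGraph V) (G : V → Type) [∀ v, Group (G v)]

abbrev Ltr := (v : V) × G v

variable {G}

noncomputable def wprod (w : List (Ltr G)) : GraphProduct Γ G :=
  (w.map fun l => GraphProduct.of Γ G l.1 l.2).prod

@[simp] theorem wprod_nil : wprod Γ ([] : List (Ltr G)) = 1 := rfl

@[simp] theorem wprod_cons (x : Ltr G) (w : List (Ltr G)) :
    wprod Γ (x :: w) = GraphProduct.of Γ G x.1 x.2 * wprod Γ w := by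
  simp [wprod]

theorem wprod_append (w₁ w₂ : List (Ltr G)) :
    wprod Γ (w₁ ++ w₂) = wprod Γ w₁ * wprod Γ w₂ := by
  simp [wprod]

theorem of_commutator {u v : V} (h : Γ.Adj u v) (a : G u) (b : G v) :
    GraphProduct.of Γ G u a * GraphProduct.of Γ G v b *
      (GraphProduct.of Γ G u a)⁻¹ * (GraphProduct.of Γ G v b)⁻¹ = 1 := by
  have hm : (Monoid.CoprodI.of a * Monoid.CoprodI.of b *
        (Monoid.CoprodI.of a)⁻¹ * (Monoid.CoprodI.of b)⁻¹)
      ∈ Subgroup.normalClosure (graphProductRels Γ G) :=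
    Subgroup.subset_normalClosure ⟨u, v, a, b, h, rfl⟩
  have h2 := (QuotientGroup.eq_one_iff _).2 hm
  simpa [GraphProduct.of, map_mul, map_inv] using h2

theorem of_comm {u v : V} (h : Γ.Adj u v) (a : G u) (b : G v) :
    GraphProduct.of Γ G u a * GraphProduct.of Γ G v b
      = GraphProduct.of Γ G v b * GraphProduct.of Γ G u a := by
  have := of_commutator Γ h a b
  have h2 : Commute (GraphProduct.of Γ G u a) (GraphProduct.of Γ G v b) := by
    rw [← commutatorElement_eq_one_iff_commute, commutatorElement_def]
    simpa [mul_assoc] using this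
  exact h2.eq

def NoF (v : V) : List (Ltr G) → Prop
  | [] => True
  | y :: t => y.1 ≠ v ∧ (Γ.Adj v y.1 → NoF v t)

@[simp] theorem NoF_nil (v : V) : NoF Γ v ([] : List (Ltr G)) := trivial

@[simp] theorem NoF_cons (v : V) (y : Ltr G) (t : List (Ltr G)) :
    NoF Γ v (y :: t) ↔ y.1 ≠ v ∧ (Γ.Adj v y.1 → NoF Γ v t) := Iff.rfl

def Red : List (Ltr G) → Prop
  | [] => True
  | y :: t => y.2 ≠ 1 ∧ NoF Γ y.1 t ∧ Red t

@[simp] theorem Red_nil : Red Γ ([] : List (Ltr G)) := trivial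

@[simp] theorem Red_cons (y : Ltr G) (t : List (Ltr G)) :
    Red Γ (y :: t) ↔ y.2 ≠ 1 ∧ NoF Γ y.1 t ∧ Red Γ t := Iff.rfl

noncomputable def act (x : Ltr G) : List (Ltr G) → List (Ltr G)
  | [] => if x.2 = 1 then [] else [x]
  | y :: t =>
    if h : y.1 = x.1 then
      (if x.2 * (h ▸ y.2) = 1 then t else ⟨x.1, x.2 * (h ▸ y.2)⟩ :: t)
    else if Γ.Adj x.1 y.1 then y :: act x t
    else if x.2 = 1 then y :: t else x :: y :: t

theorem act_nil (x : Ltr G) : act Γ x [] = if x.2 = 1 then [] else [x] := rfl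

theorem act_cons (x y : Ltr G) (t : List (Ltr G)) :
    act Γ x (y :: t) =
      if h : y.1 = x.1 then
        (if x.2 * (h ▸ y.2) = 1 then t else ⟨x.1, x.2 * (h ▸ y.2)⟩ :: t)
      else if Γ.Adj x.1 y.1 then y :: act Γ x t
      else if x.2 = 1 then y :: t else x :: y :: t := rfl


inductive SwapR : List (Ltr G) → List (Ltr G) → Prop
  | mk (a b : List (Ltr G)) (p q : Ltr G) (h : Γ.Adj p.1 q.1) :
      SwapR (a ++ p :: q :: b) (a ++ q :: p :: b)

def ShEq (w w' : List (Ltr G)) : Prop := Relation.EqvGen (SwapR Γ) w w'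

theorem ShEq.refl (w : List (Ltr G)) : ShEq Γ w w := Relation.EqvGen.refl w

theorem ShEq.symm' {w w' : List (Ltr G)} (h : ShEq Γ w w') : ShEq Γ w' w :=
  Relation.EqvGen.symm _ _ h

theorem ShEq.trans' {w₁ w₂ w₃ : List (Ltr G)} (h : ShEq Γ w₁ w₂) (h' : ShEq Γ w₂ w₃) :
    ShEq Γ w₁ w₃ := Relation.EqvGen.trans _ _ _ h h'

theorem ShEq.single {w w' : List (Ltr G)} (h : SwapR Γ w w') : ShEq Γ w w' :=
  Relation.EqvGen.rel _ _ h

theorem SwapR.cons {w w' : List (Ltr G)} (c : Ltr G) (h : SwapR Γ w w') :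
    SwapR Γ (c :: w) (c :: w') := by
  obtain ⟨a, b, p, q, hpq⟩ := h
  exact SwapR.mk (c :: a) b p q hpq

theorem ShEq.cons {w w' : List (Ltr G)} (c : Ltr G) (h : ShEq Γ w w') :
    ShEq Γ (c :: w) (c :: w') := by
  induction h with
  | rel _ _ h => exact ShEq.single Γ (SwapR.cons Γ c h)
  | refl _ => exact ShEq.refl Γ _
  | symm _ _ _ ih => exact ih.symm' Γ
  | trans _ _ _ _ _ ih₁ ih₂ => exact ih₁.trans' Γ ih₂

theorem ShEq.swap (p q : Ltr G) (t : List (Ltr G)) (h : Γ.Adj p.1 q.1) :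
    ShEq Γ (p :: q :: t) (q :: p :: t) := ShEq.single Γ (SwapR.mk [] t p q h)

theorem SwapR.perm {w w' : List (Ltr G)} (h : SwapR Γ w w') : w.Perm w' := by
  obtain ⟨a, b, p, q, _⟩ := h
  exact List.Perm.append_left a (List.Perm.swap q p b)

theorem ShEq.perm {w w' : List (Ltr G)} (h : ShEq Γ w w') : w.Perm w' := by
  induction h with
  | rel _ _ h => exact h.perm Γ
  | refl _ => exact List.Perm.refl _
  | symm _ _ _ ih => exact ih.symm
  | trans _ _ _ _ _ ih₁ ih₂ => exact ih₁.trans ih₂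

theorem SwapR.wprod_eq {w w' : List (Ltr G)} (h : SwapR Γ w w') :
    wprod Γ w = wprod Γ w' := by
  obtain ⟨a, b, p, q, hpq⟩ := h
  simp only [wprod_append, wprod_cons, mul_assoc]
  congr 1
  rw [← mul_assoc, ← mul_assoc, of_comm Γ hpq]

theorem ShEq.wprod_eq {w w' : List (Ltr G)} (h : ShEq Γ w w') :
    wprod Γ w = wprod Γ w' := by
  induction h with
  | rel _ _ h => exact h.wprod_eq Γ
  | refl _ => rfl
  | symm _ _ _ ih => exact ih.symm
  | trans _ _ _ _ _ ih₁ ih₂ => exact ih₁.trans ih₂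

theorem NoF_swap {v : V} {p q : Ltr G} (hpq : Γ.Adj p.1 q.1) (a b : List (Ltr G)) :
    NoF Γ v (a ++ p :: q :: b) ↔ NoF Γ v (a ++ q :: p :: b) := by
  induction a with
  | nil =>
    simp only [List.nil_append, NoF_cons]
    constructor
    · rintro ⟨hp, hrest⟩
      have hq : q.1 ≠ v := by
        intro hqv
        subst hqv
        exact (hrest hpq.symm).1 rfl
      refine ⟨hq, fun hvq => ⟨hp, fun hvp => (hrest hvp).2 hvq⟩⟩
    · rintro ⟨hq, hrest⟩
      have hp : p.1 ≠ v := by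
        intro hpv
        subst hpv
        exact (hrest hpq).1 rfl
      refine ⟨hp, fun hvp => ⟨hq, fun hvq => (hrest hvq).2 hvp⟩⟩
  | cons c a' ih =>
    simp only [List.cons_append, NoF_cons]
    rw [ih]

theorem SwapR.red_iff {w w' : List (Ltr G)} (h : SwapR Γ w w') :
    Red Γ w ↔ Red Γ w' := by
  obtain ⟨a, b, p, q, hpq⟩ := h
  induction a with
  | nil =>
    simp only [List.nil_append, Red_cons, NoF_cons]
    have h1 : Γ.Adj p.1 q.1 := hpq
    have h2 : Γ.Adj q.1 p.1 := hpq.symm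
    constructor
    · rintro ⟨hp1, ⟨hqp, hnfp⟩, hq1, hnfq, hred⟩
      exact ⟨hq1, ⟨fun e => hqp e.symm, fun _ => hnfq⟩, hp1, hnfp h1, hred⟩
    · rintro ⟨hq1, ⟨hpq', hnfq⟩, hp1, hnfp, hred⟩
      exact ⟨hp1, ⟨fun e => hpq' e.symm, fun _ => hnfp⟩, hq1, hnfq h2, hred⟩
  | cons c a' ih =>
    simp only [List.cons_append, Red_cons]
    rw [ih, NoF_swap Γ hpq]

theorem ShEq.red_iff {w w' : List (Ltr G)} (h : ShEq Γ w w') :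
    Red Γ w ↔ Red Γ w' := by
  induction h with
  | rel _ _ h => exact h.red_iff Γ
  | refl _ => exact Iff.rfl
  | symm _ _ _ ih => exact ih.symm
  | trans _ _ _ _ _ ih₁ ih₂ => exact ih₁.trans ih₂

theorem NoF_iff {v : V} (w : List (Ltr G)) :
    NoF Γ v w ↔ ¬ ∃ (a : List (Ltr G)) (y : Ltr G) (b : List (Ltr G)), w = a ++ y :: b ∧ y.1 = v ∧ ∀ z ∈ a, Γ.Adj v z.1 := by
  induction w with
  | nil =>
    simp only [NoF_nil, true_iff]
    rintro ⟨a, y, b, he, -, -⟩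
    exact List.cons_ne_nil _ _ (List.append_eq_nil_iff.mp he.symm).2
  | cons c t ih =>
    simp only [NoF_cons]
    constructor
    · rintro ⟨hc, hrest⟩ ⟨a, y, b, he, hyv, hadj⟩
      rcases a with _ | ⟨c', a'⟩
      · simp only [List.nil_append, List.cons.injEq] at he
        exact hc (he.1 ▸ hyv)
      · simp only [List.cons_append, List.cons.injEq] at he
        obtain ⟨rfl, he2⟩ := he
        have hvc : Γ.Adj v c.1 := hadj c (List.mem_cons_self)
        exact (ih.mp (hrest hvc)) ⟨a', y, b, he2, hyv, fun z hz => hadj z (List.mem_cons_of_mem _ hz)⟩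
    · intro hne
      constructor
      · intro hcv
        exact hne ⟨[], c, t, rfl, hcv, by simp⟩
      · intro hvc
        rw [ih]
        rintro ⟨a, y, b, he, hyv, hadj⟩
        refine hne ⟨c :: a, y, b, by rw [he]; rfl, hyv, ?_⟩
        intro z hz
        rcases List.mem_cons.mp hz with rfl | hz
        · exact hvc
        · exact hadj z hz



theorem act_nil_one {u : V} {g : G u} (h : g = 1) : act Γ (⟨u, g⟩ : Ltr G) [] = [] := by
  rw [act_nil, if_pos h]

theorem act_nil_ne {u : V} {g : G u} (h : g ≠ 1) : act Γ (⟨u, g⟩ : Ltr G) [] = [⟨u, g⟩] := by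
  rw [act_nil, if_neg h]

theorem act_cons_same (u : V) (g c : G u) (t : List (Ltr G)) :
    act Γ (⟨u, g⟩ : Ltr G) (⟨u, c⟩ :: t) = if g * c = 1 then t else ⟨u, g * c⟩ :: t := by
  rw [act_cons, dif_pos rfl]

theorem act_cons_adj {x y : Ltr G} (t : List (Ltr G)) (hne : y.1 ≠ x.1)
    (hA : Γ.Adj x.1 y.1) : act Γ x (y :: t) = y :: act Γ x t := by
  rw [act_cons, dif_neg hne, if_pos hA]

theorem act_cons_blk {x y : Ltr G} (t : List (Ltr G)) (hne : y.1 ≠ x.1)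
    (hA : ¬ Γ.Adj x.1 y.1) (hx : x.2 ≠ 1) : act Γ x (y :: t) = x :: y :: t := by
  rw [act_cons, dif_neg hne, if_neg hA, if_neg hx]

theorem act_cons_blk_one {x y : Ltr G} (t : List (Ltr G)) (hne : y.1 ≠ x.1)
    (hA : ¬ Γ.Adj x.1 y.1) (hx : x.2 = 1) : act Γ x (y :: t) = y :: t := by
  rw [act_cons, dif_neg hne, if_neg hA, if_pos hx]

theorem NoF_act {u : V} {x : Ltr G} (hadj : Γ.Adj u x.1) {w : List (Ltr G)}
    (h : NoF Γ u w) : NoF Γ u (act Γ x w) := by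
  obtain ⟨xv, g⟩ := x
  induction w with
  | nil =>
    by_cases hg : g = 1
    · rw [act_nil_one Γ hg]; trivial
    · rw [act_nil_ne Γ hg]
      exact ⟨fun e => hadj.ne e.symm, fun _ => trivial⟩
  | cons y t ih =>
    obtain ⟨yv, c⟩ := y
    obtain ⟨hy1, hy2⟩ := h
    by_cases hyx : yv = xv
    · subst hyx
      have hadj' : Γ.Adj u yv := hadj
      rw [act_cons_same]
      split
      · exact hy2 hadj'
      · exact ⟨fun e => hadj.ne e.symm, fun _ => hy2 hadj'⟩
    · by_cases hA : Γ.Adj xv yv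
      · rw [act_cons_adj Γ t hyx hA]
        exact ⟨hy1, fun hu => ih (hy2 hu)⟩
      · by_cases hg : g = 1
        · rw [act_cons_blk_one Γ t hyx hA hg]; exact ⟨hy1, hy2⟩
        · rw [act_cons_blk Γ t hyx hA hg]
          exact ⟨fun e => hadj.ne e.symm, fun _ => ⟨hy1, hy2⟩⟩

theorem act_red (x : Ltr G) {w : List (Ltr G)} (h : Red Γ w) : Red Γ (act Γ x w) := by
  obtain ⟨xv, g⟩ := x
  induction w with
  | nil =>
    by_cases hg : g = 1
    · rw [act_nil_one Γ hg]; trivial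
    · rw [act_nil_ne Γ hg]; exact ⟨hg, trivial, trivial⟩
  | cons y t ih =>
    obtain ⟨yv, c⟩ := y
    obtain ⟨hy1, hnf, hred⟩ := h
    by_cases hyx : yv = xv
    · subst hyx
      rw [act_cons_same]
      split
      · exact hred
      next hne => exact ⟨hne, hnf, hred⟩
    · by_cases hA : Γ.Adj xv yv
      · rw [act_cons_adj Γ t hyx hA]
        exact ⟨hy1, NoF_act Γ hA.symm hnf, ih hred⟩
      · by_cases hg : g = 1
        · rw [act_cons_blk_one Γ t hyx hA hg]; exact ⟨hy1, hnf, hred⟩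
        · rw [act_cons_blk Γ t hyx hA hg]
          exact ⟨hg, ⟨hyx, fun ha => absurd ha hA⟩, hy1, hnf, hred⟩

theorem act_wprod (x : Ltr G) (w : List (Ltr G)) :
    wprod Γ (act Γ x w) = GraphProduct.of Γ G x.1 x.2 * wprod Γ w := by
  obtain ⟨xv, g⟩ := x
  induction w with
  | nil =>
    by_cases hg : g = 1
    · rw [act_nil_one Γ hg]
      subst hg
      simp [wprod]
    · rw [act_nil_ne Γ hg]
      simp [wprod]
  | cons y t ih =>
    obtain ⟨yv, c⟩ := y
    by_cases hyx : yv = xv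
    · subst hyx
      rw [act_cons_same]
      split
      next hgc =>
        rw [wprod_cons, ← mul_assoc, ← map_mul, hgc, map_one, one_mul]
      next hgc =>
        rw [wprod_cons, wprod_cons, ← mul_assoc, ← map_mul]
    · by_cases hA : Γ.Adj xv yv
      · rw [act_cons_adj Γ t hyx hA, wprod_cons, ih, wprod_cons, ← mul_assoc,
          ← mul_assoc, of_comm Γ hA]
      · by_cases hg : g = 1
        · rw [act_cons_blk_one Γ t hyx hA hg]
          subst hg
          rw [map_one, one_mul]
        · rw [act_cons_blk Γ t hyx hA hg, wprod_cons, wprod_cons]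

theorem act_mem (x : Ltr G) (w : List (Ltr G)) :
    ∀ l ∈ act Γ x w, l.1 = x.1 ∨ l ∈ w := by
  obtain ⟨xv, g⟩ := x
  induction w with
  | nil =>
    by_cases hg : g = 1
    · rw [act_nil_one Γ hg]; intro l hl; exact absurd hl List.not_mem_nil
    · rw [act_nil_ne Γ hg]
      intro l hl
      rw [List.mem_singleton] at hl
      exact Or.inl (by rw [hl])
  | cons y t ih =>
    obtain ⟨yv, c⟩ := y
    by_cases hyx : yv = xv
    · subst hyx
      rw [act_cons_same]
      split
      · intro l hl; exact Or.inr (List.mem_cons_of_mem _ hl)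
      · intro l hl
        rcases List.mem_cons.mp hl with rfl | hl
        · exact Or.inl rfl
        · exact Or.inr (List.mem_cons_of_mem _ hl)
    · by_cases hA : Γ.Adj xv yv
      · rw [act_cons_adj Γ t hyx hA]
        intro l hl
        rcases List.mem_cons.mp hl with rfl | hl
        · exact Or.inr (List.mem_cons_self)
        · rcases ih l hl with h | h
          · exact Or.inl h
          · exact Or.inr (List.mem_cons_of_mem _ h)
      · by_cases hg : g = 1
        · rw [act_cons_blk_one Γ t hyx hA hg]
          intro l hl; exact Or.inr hl
        · rw [act_cons_blk Γ t hyx hA hg]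
          intro l hl
          rcases List.mem_cons.mp hl with rfl | hl
          · exact Or.inl rfl
          · exact Or.inr hl

theorem act_length_le (x : Ltr G) (w : List (Ltr G)) :
    (act Γ x w).length ≤ w.length + 1 := by
  obtain ⟨xv, g⟩ := x
  induction w with
  | nil =>
    by_cases hg : g = 1
    · rw [act_nil_one Γ hg]; simp
    · rw [act_nil_ne Γ hg]; simp
  | cons y t ih =>
    obtain ⟨yv, c⟩ := y
    by_cases hyx : yv = xv
    · subst hyx
      rw [act_cons_same]
      split <;> simp [List.length_cons] <;> omega
    · by_cases hA : Γ.Adj xv yv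
      · rw [act_cons_adj Γ t hyx hA]
        simpa [List.length_cons] using ih
      · by_cases hg : g = 1
        · rw [act_cons_blk_one Γ t hyx hA hg]; simp
        · rw [act_cons_blk Γ t hyx hA hg]; simp [List.length_cons]

theorem length_le_act (x : Ltr G) (w : List (Ltr G)) :
    w.length ≤ (act Γ x w).length + 1 := by
  obtain ⟨xv, g⟩ := x
  induction w with
  | nil => simp
  | cons y t ih =>
    obtain ⟨yv, c⟩ := y
    by_cases hyx : yv = xv
    · subst hyx
      rw [act_cons_same]
      split <;> simp [List.length_cons]
    · by_cases hA : Γ.Adj xv yv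
      · rw [act_cons_adj Γ t hyx hA]
        simp only [List.length_cons]
        omega
      · by_cases hg : g = 1
        · rw [act_cons_blk_one Γ t hyx hA hg]; simp
        · rw [act_cons_blk Γ t hyx hA hg]; simp [List.length_cons]

theorem act_front {x : Ltr G} (hx : x.2 ≠ 1) {w : List (Ltr G)}
    (hnf : NoF Γ x.1 w) (hred : Red Γ w) : ShEq Γ (act Γ x w) (x :: w) := by
  induction w with
  | nil =>
    obtain ⟨xv, g⟩ := x
    rw [act_nil_ne Γ hx]
    exact ShEq.refl Γ _
  | cons y t ih =>
    obtain ⟨hy1, himp⟩ := hnf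
    obtain ⟨hyn, hynf, hredt⟩ := hred
    by_cases hA : Γ.Adj x.1 y.1
    · rw [act_cons_adj Γ t (fun e => hy1 e) hA]
      have h1 : ShEq Γ (y :: act Γ x t) (y :: x :: t) := ShEq.cons Γ y (ih (himp hA) hredt)
      exact h1.trans' Γ (ShEq.swap Γ y x t hA.symm)
    · rw [act_cons_blk Γ t (fun e => hy1 e) hA hx]
      exact ShEq.refl Γ _

theorem act_one (v : V) {w : List (Ltr G)} (hred : Red Γ w) :
    act Γ (⟨v, 1⟩ : Ltr G) w = w := by
  induction w with
  | nil => exact act_nil_one Γ rfl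
  | cons y t ih =>
    obtain ⟨yv, c⟩ := y
    obtain ⟨hyn, hynf, hredt⟩ := hred
    by_cases hyu : yv = v
    · subst hyu
      rw [act_cons_same, one_mul, if_neg hyn]
    · by_cases hA : Γ.Adj v yv
      · rw [act_cons_adj Γ t hyu hA, ih hredt]
      · exact act_cons_blk_one Γ t hyu hA rfl

theorem act_act_same (v : V) (a b : G v) {w : List (Ltr G)} (hred : Red Γ w) :
    ShEq Γ (act Γ (⟨v, a⟩ : Ltr G) (act Γ (⟨v, b⟩ : Ltr G) w))
      (act Γ (⟨v, a * b⟩ : Ltr G) w) := by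
  induction w with
  | nil =>
    by_cases hb : b = 1
    · rw [hb, act_nil_one Γ rfl, mul_one]
      exact ShEq.refl Γ _
    · rw [act_nil_ne Γ hb]
      by_cases hab : a * b = 1
      · rw [act_cons_same, if_pos hab, act_nil_one Γ hab]
        exact ShEq.refl Γ _
      · rw [act_cons_same, if_neg hab, act_nil_ne Γ hab]
        exact ShEq.refl Γ _
  | cons y t ih =>
    obtain ⟨yv, c⟩ := y
    obtain ⟨hyn, hynf, hredt⟩ := hred
    by_cases hyv : yv = v
    · subst hyv
      rw [act_cons_same, act_cons_same]
      have habc : a * b * c = a * (b * c) := mul_assoc a b c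
      by_cases hbc : b * c = 1
      · rw [if_pos hbc]
        have habc' : a * b * c = a := by rw [habc, hbc, mul_one]
        by_cases ha : a = 1
        · rw [if_pos (show a * b * c = 1 by rw [habc', ha]), ha, act_one Γ yv hredt]
          exact ShEq.refl Γ _
        · rw [if_neg (by rw [habc']; exact ha), habc']
          exact act_front Γ ha hynf hredt
      · rw [if_neg hbc, act_cons_same, ← habc]
        exact ShEq.refl Γ _
    · by_cases hA : Γ.Adj v yv
      · rw [act_cons_adj Γ t hyv hA, act_cons_adj Γ (act Γ (⟨v, b⟩ : Ltr G) t) hyv hA,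
          act_cons_adj Γ t hyv hA]
        exact ShEq.cons Γ _ (ih hredt)
      · by_cases hb : b = 1
        · rw [hb, act_one Γ v (show Red Γ (⟨yv, c⟩ :: t) from ⟨hyn, hynf, hredt⟩), mul_one]
          exact ShEq.refl Γ _
        · rw [act_cons_blk Γ t hyv hA hb, act_cons_same]
          by_cases hab : a * b = 1
          · rw [if_pos hab]
            have he : (⟨v, a * b⟩ : Ltr G) = ⟨v, (1 : G v)⟩ := by rw [hab]
            rw [he, act_one Γ v (show Red Γ (⟨yv, c⟩ :: t) from ⟨hyn, hynf, hredt⟩)]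
            exact ShEq.refl Γ _
          · rw [if_neg hab, act_cons_blk Γ t hyv hA hab]
            exact ShEq.refl Γ _

theorem act_act_comm {u v : V} (hA : Γ.Adj u v) (a : G u) (b : G v)
    {w : List (Ltr G)} (hred : Red Γ w) :
    ShEq Γ (act Γ (⟨u, a⟩ : Ltr G) (act Γ (⟨v, b⟩ : Ltr G) w))
      (act Γ (⟨v, b⟩ : Ltr G) (act Γ (⟨u, a⟩ : Ltr G) w)) := by
  by_cases ha : a = 1
  · rw [ha, act_one Γ u (act_red Γ _ hred), act_one Γ u hred]
    exact ShEq.refl Γ _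
  by_cases hb : b = 1
  · rw [hb, act_one Γ v hred, act_one Γ v (act_red Γ _ hred)]
    exact ShEq.refl Γ _
  have huv : u ≠ v := hA.ne
  induction w with
  | nil =>
    rw [act_nil_ne Γ hb, act_nil_ne Γ ha,
      act_cons_adj Γ [] (show v ≠ u from fun e => huv e.symm) hA,
      act_cons_adj Γ [] huv hA.symm,
      act_nil_ne Γ ha, act_nil_ne Γ hb]
    exact ShEq.swap Γ ⟨v, b⟩ ⟨u, a⟩ [] hA.symm
  | cons y t ih =>
    obtain ⟨yv, c⟩ := y
    obtain ⟨hyn, hynf, hredt⟩ := hred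
    by_cases hyu : yv = u
    · subst hyu
      rw [act_cons_adj Γ t huv hA.symm, act_cons_same, act_cons_same]
      by_cases hac : a * c = 1
      · rw [if_pos hac, if_pos hac]
        exact ShEq.refl Γ _
      · rw [if_neg hac, if_neg hac, act_cons_adj Γ t huv hA.symm]
        exact ShEq.refl Γ _
    · by_cases hyv : yv = v
      · subst hyv
        rw [act_cons_same, act_cons_adj Γ t (fun e => huv e.symm) hA, act_cons_same]
        by_cases hbc : b * c = 1
        · rw [if_pos hbc, if_pos hbc]
          exact ShEq.refl Γ _
        · rw [if_neg hbc, if_neg hbc, act_cons_adj Γ t (fun e => huv e.symm) hA]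
          exact ShEq.refl Γ _
      · by_cases hAu : Γ.Adj u yv
        · by_cases hAv : Γ.Adj v yv
          · rw [act_cons_adj Γ t hyv hAv, act_cons_adj Γ _ hyu hAu,
              act_cons_adj Γ t hyu hAu, act_cons_adj Γ _ hyv hAv]
            exact ShEq.cons Γ _ (ih hredt)
          · -- x = ⟨u,a⟩ passes y, z = ⟨v,b⟩ blocks at y
            rw [act_cons_blk Γ t hyv hAv hb, act_cons_adj Γ t hyu hAu,
              act_cons_adj Γ (⟨yv, c⟩ :: t) (show v ≠ u from fun e => huv e.symm) hA,
              act_cons_adj Γ t hyu hAu,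
              act_cons_blk Γ (act Γ (⟨u, a⟩ : Ltr G) t) hyv hAv hb]
            exact ShEq.refl Γ _
        · by_cases hAv : Γ.Adj v yv
          · rw [act_cons_adj Γ t hyv hAv, act_cons_blk Γ (act Γ (⟨v, b⟩ : Ltr G) t) hyu hAu ha,
              act_cons_blk Γ t hyu hAu ha,
              act_cons_adj Γ (⟨yv, c⟩ :: t) huv hA.symm,
              act_cons_adj Γ t hyv hAv]
            exact ShEq.refl Γ _
          · rw [act_cons_blk Γ t hyv hAv hb, act_cons_blk Γ t hyu hAu ha,
              act_cons_adj Γ (⟨yv, c⟩ :: t) (show v ≠ u from fun e => huv e.symm) hA,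
              act_cons_adj Γ (⟨yv, c⟩ :: t) huv hA.symm,
              act_cons_blk Γ t hyu hAu ha, act_cons_blk Γ t hyv hAv hb]
            exact ShEq.swap Γ ⟨v, b⟩ ⟨u, a⟩ (⟨yv, c⟩ :: t) hA.symm

theorem act_swapr_aux (x : Ltr G) (p q : Ltr G) (hpq : Γ.Adj p.1 q.1)
    (A B : List (Ltr G)) (hred : Red Γ (A ++ p :: q :: B)) :
    ShEq Γ (act Γ x (A ++ p :: q :: B)) (act Γ x (A ++ q :: p :: B)) := by
  obtain ⟨u, g⟩ := x
  by_cases hg : g = 1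
  · subst hg
    rw [act_one Γ u hred, act_one Γ u (((SwapR.mk A B p q hpq).red_iff Γ).mp hred)]
    exact ShEq.single Γ (SwapR.mk A B p q hpq)
  revert hred
  induction A with
  | nil =>
    intro hred
    obtain ⟨pv, pc⟩ := p
    obtain ⟨qv, qc⟩ := q
    simp only [List.nil_append] at hred ⊢
    obtain ⟨hpn, hpnf, hqn, hqnf, hredB⟩ :
        pc ≠ 1 ∧ NoF Γ pv (⟨qv, qc⟩ :: B) ∧ qc ≠ 1 ∧ NoF Γ qv B ∧ Red Γ B := hred
    have hqp : qv ≠ pv := hpnf.1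
    have hpq' : Γ.Adj pv qv := hpq
    by_cases hup : pv = u
    · subst hup
      rw [act_cons_adj Γ (⟨pv, pc⟩ :: B) hqp hpq', act_cons_same, act_cons_same]
      by_cases hgp : g * pc = 1
      · rw [if_pos hgp, if_pos hgp]
        exact ShEq.refl Γ _
      · rw [if_neg hgp, if_neg hgp]
        exact ShEq.swap Γ _ _ B hpq'
    · by_cases huq : qv = u
      · subst huq
        rw [act_cons_adj Γ (⟨qv, qc⟩ :: B) hup hpq'.symm, act_cons_same, act_cons_same]
        by_cases hgq : g * qc = 1
        · rw [if_pos hgq, if_pos hgq]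
          exact ShEq.refl Γ _
        · rw [if_neg hgq, if_neg hgq]
          exact ShEq.swap Γ _ _ B hpq'
      · by_cases hAp : Γ.Adj u pv
        · by_cases hAq : Γ.Adj u qv
          · rw [act_cons_adj Γ (⟨qv, qc⟩ :: B) hup hAp,
              act_cons_adj Γ B huq hAq,
              act_cons_adj Γ (⟨pv, pc⟩ :: B) huq hAq,
              act_cons_adj Γ B hup hAp]
            exact ShEq.swap Γ _ _ _ hpq'
          · rw [act_cons_adj Γ (⟨qv, qc⟩ :: B) hup hAp,
              act_cons_blk Γ B huq hAq hg,
              act_cons_blk Γ (⟨pv, pc⟩ :: B) huq hAq hg]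
            exact (ShEq.swap Γ ⟨pv, pc⟩ ⟨u, g⟩ (⟨qv, qc⟩ :: B) hAp.symm).trans' Γ
              (ShEq.cons Γ _ (ShEq.swap Γ _ _ B hpq'))
        · by_cases hAq : Γ.Adj u qv
          · rw [act_cons_blk Γ (⟨qv, qc⟩ :: B) hup hAp hg,
              act_cons_adj Γ (⟨pv, pc⟩ :: B) huq hAq,
              act_cons_blk Γ B hup hAp hg]
            exact (ShEq.cons Γ (⟨u, g⟩ : Ltr G)
                (ShEq.swap Γ ⟨pv, pc⟩ ⟨qv, qc⟩ B hpq')).trans' Γ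
              (ShEq.swap Γ ⟨u, g⟩ ⟨qv, qc⟩ (⟨pv, pc⟩ :: B) hAq)
          · rw [act_cons_blk Γ (⟨qv, qc⟩ :: B) hup hAp hg,
              act_cons_blk Γ (⟨pv, pc⟩ :: B) huq hAq hg]
            exact ShEq.cons Γ _ (ShEq.swap Γ _ _ B hpq')
  | cons c A' ih =>
    intro hred
    obtain ⟨cv, cc⟩ := c
    simp only [List.cons_append] at hred ⊢
    obtain ⟨hcn, hcnf, hredr⟩ :
        cc ≠ 1 ∧ NoF Γ cv (A' ++ p :: q :: B) ∧ Red Γ (A' ++ p :: q :: B) := hred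
    by_cases hcu : cv = u
    · subst hcu
      rw [act_cons_same, act_cons_same]
      by_cases hgc : g * cc = 1
      · rw [if_pos hgc, if_pos hgc]
        exact ShEq.single Γ (SwapR.mk A' B p q hpq)
      · rw [if_neg hgc, if_neg hgc]
        exact ShEq.cons Γ _ (ShEq.single Γ (SwapR.mk A' B p q hpq))
    · by_cases hAc : Γ.Adj u cv
      · rw [act_cons_adj Γ _ hcu hAc, act_cons_adj Γ _ hcu hAc]
        exact ShEq.cons Γ _ (ih hredr)
      · rw [act_cons_blk Γ _ hcu hAc hg, act_cons_blk Γ _ hcu hAc hg]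
        exact ShEq.cons Γ _ (ShEq.cons Γ _ (ShEq.single Γ (SwapR.mk A' B p q hpq)))

theorem act_sheq (x : Ltr G) {w w' : List (Ltr G)} (h : ShEq Γ w w') (hred : Red Γ w) :
    ShEq Γ (act Γ x w) (act Γ x w') := by
  revert hred
  induction h with
  | rel w₁ w₂ h1 =>
    intro hred
    obtain ⟨A, B, p, q, hpq⟩ := h1
    exact act_swapr_aux Γ x p q hpq A B hred
  | refl _ => intro _; exact ShEq.refl Γ _
  | symm w₁ w₂ h12 ih =>
    intro hred2
    exact (ih ((ShEq.red_iff Γ h12).mpr hred2)).symm' Γ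
  | trans w₁ w₂ w₃ h12 h23 ih₁ ih₂ =>
    intro hred1
    exact (ih₁ hred1).trans' Γ (ih₂ ((ShEq.red_iff Γ h12).mp hred1))

variable (G) in
abbrev RW : Type := {w : List (Ltr G) // Red Γ w}

variable (G) in
instance rwSetoid : Setoid (RW Γ G) :=
  ⟨fun w w' => ShEq Γ w.1 w'.1,
   ⟨fun _ => ShEq.refl Γ _, fun h => h.symm' Γ, fun h h' => h.trans' Γ h'⟩⟩

variable (G) in
abbrev NFQ : Type := Quotient (rwSetoid Γ G)

variable (G) in
noncomputable def mact (x : Ltr G) : NFQ Γ G → NFQ Γ G :=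
  Quotient.map (fun w => ⟨act Γ x w.1, act_red Γ x w.2⟩)
    (fun w w' (h : ShEq Γ w.1 w'.1) => act_sheq Γ x h w.2)

theorem mact_mk (x : Ltr G) (w : RW Γ G) :
    mact Γ G x ⟦w⟧ = ⟦(⟨act Γ x w.1, act_red Γ x w.2⟩ : RW Γ G)⟧ := rfl

variable (G) in
noncomputable def toPerm (v : V) : G v →* Equiv.Perm (NFQ Γ G) where
  toFun g :=
    { toFun := mact Γ G ⟨v, g⟩
      invFun := mact Γ G ⟨v, g⁻¹⟩
      left_inv := by
        intro m
        induction m using Quotient.ind with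
        | _ w =>
          rw [mact_mk, mact_mk]
          refine Quotient.sound ?_
          have h := act_act_same Γ v g⁻¹ g w.2
          rw [inv_mul_cancel, act_one Γ v w.2] at h
          exact h
      right_inv := by
        intro m
        induction m using Quotient.ind with
        | _ w =>
          rw [mact_mk, mact_mk]
          refine Quotient.sound ?_
          have h := act_act_same Γ v g g⁻¹ w.2
          rw [mul_inv_cancel, act_one Γ v w.2] at h
          exact h }
  map_one' := by
    ext m
    induction m using Quotient.ind with
    | _ w =>
      show mact Γ G ⟨v, 1⟩ ⟦w⟧ = ⟦w⟧
      rw [mact_mk]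
      refine Quotient.sound (show ShEq Γ (act Γ (⟨v, 1⟩ : Ltr G) w.1) w.1 from ?_)
      rw [act_one Γ v w.2]
      exact ShEq.refl Γ _
  map_mul' := by
    intro g h
    ext m
    induction m using Quotient.ind with
    | _ w =>
      show mact Γ G ⟨v, g * h⟩ ⟦w⟧ = mact Γ G ⟨v, g⟩ (mact Γ G ⟨v, h⟩ ⟦w⟧)
      rw [mact_mk, mact_mk, mact_mk]
      exact Quotient.sound ((act_act_same Γ v g h w.2).symm' Γ)

variable (G) in
noncomputable def bigF : Monoid.CoprodI G →* Equiv.Perm (NFQ Γ G) :=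
  Monoid.CoprodI.lift (toPerm Γ G)

theorem toPerm_commute {u v : V} (hA : Γ.Adj u v) (a : G u) (b : G v) :
    Commute (toPerm Γ G u a) (toPerm Γ G v b) := by
  apply Equiv.ext
  intro m
  induction m using Quotient.ind with
  | _ w =>
    show mact Γ G ⟨u, a⟩ (mact Γ G ⟨v, b⟩ ⟦w⟧) = mact Γ G ⟨v, b⟩ (mact Γ G ⟨u, a⟩ ⟦w⟧)
    rw [mact_mk, mact_mk, mact_mk, mact_mk]
    exact Quotient.sound (act_act_comm Γ hA a b w.2)

theorem bigF_rels {r : Monoid.CoprodI G} (hr : r ∈ graphProductRels Γ G) :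
    bigF Γ G r = 1 := by
  obtain ⟨u, v, g, h, hA, rfl⟩ := hr
  rw [map_mul, map_mul, map_mul, map_inv, map_inv]
  have : bigF Γ G (Monoid.CoprodI.of g) = toPerm Γ G u g := Monoid.CoprodI.lift_of _ _
  rw [this]
  have : bigF Γ G (Monoid.CoprodI.of h) = toPerm Γ G v h := Monoid.CoprodI.lift_of _ _
  rw [this]
  have hc := toPerm_commute Γ hA g h
  rw [hc.eq]
  group

variable (G) in
noncomputable def Phi : GraphProduct Γ G →* Equiv.Perm (NFQ Γ G) :=
  QuotientGroup.lift _ (bigF Γ G)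
    (by
      intro r hr
      have hle : Subgroup.normalClosure (graphProductRels Γ G) ≤ (bigF Γ G).ker :=
        Subgroup.normalClosure_le_normal (fun x hx => bigF_rels Γ hx)
      exact hle hr)

theorem phi_of (v : V) (g : G v) :
    Phi Γ G (GraphProduct.of Γ G v g) = toPerm Γ G v g := by
  show Phi Γ G (QuotientGroup.mk' _ (Monoid.CoprodI.of g)) = _
  rw [QuotientGroup.mk'_apply]
  show bigF Γ G (Monoid.CoprodI.of g) = _
  exact Monoid.CoprodI.lift_of _ _

theorem phi_wprod {w : List (Ltr G)} (hw : Red Γ w) :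
    Phi Γ G (wprod Γ w) ⟦(⟨[], trivial⟩ : RW Γ G)⟧ = ⟦(⟨w, hw⟩ : RW Γ G)⟧ := by
  induction w with
  | nil => rw [wprod_nil, map_one]; rfl
  | cons x t ih =>
    obtain ⟨hx1, hnf, hredt⟩ : x.2 ≠ 1 ∧ NoF Γ x.1 t ∧ Red Γ t := hw
    rw [wprod_cons, map_mul]
    have h1 : Phi Γ G (wprod Γ t) ⟦(⟨[], trivial⟩ : RW Γ G)⟧ = ⟦(⟨t, hredt⟩ : RW Γ G)⟧ :=
      ih hredt
    rw [Equiv.Perm.mul_apply, h1, phi_of]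
    show mact Γ G ⟨x.1, x.2⟩ ⟦(⟨t, hredt⟩ : RW Γ G)⟧ = _
    rw [mact_mk]
    exact Quotient.sound (act_front Γ hx1 hnf hredt)

theorem red_unique {w w' : List (Ltr G)} (hw : Red Γ w) (hw' : Red Γ w')
    (h : wprod Γ w = wprod Γ w') : ShEq Γ w w' := by
  have h1 := phi_wprod Γ hw
  rw [h, phi_wprod Γ hw'] at h1
  exact ShEq.symm' Γ (Quotient.exact h1)

theorem red_unique_perm {w w' : List (Ltr G)} (hw : Red Γ w) (hw' : Red Γ w')
    (h : wprod Γ w = wprod Γ w') : w.Perm w' :=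
  (red_unique Γ hw hw' h).perm Γ

theorem vertex_le_span {Λ : Set V} {v : V} (hv : v ∈ Λ) :
    vertexSubgroup Γ G v ≤ spanSubgroup Γ G Λ := by
  have := le_iSup₂ (f := fun (u : V) (_ : u ∈ Λ) => vertexSubgroup Γ G u) v hv
  exact this

theorem wprod_mem_span {Λ : Set V} {w : List (Ltr G)} (hw : ∀ l ∈ w, l.1 ∈ Λ) :
    wprod Γ w ∈ spanSubgroup Γ G Λ := by
  induction w with
  | nil => exact one_mem _
  | cons x t ih =>
    rw [wprod_cons]
    refine mul_mem ?_ (ih fun l hl => hw l (List.mem_cons_of_mem _ hl))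
    exact vertex_le_span Γ (hw x (List.mem_cons_self)) ⟨x.2, rfl⟩

theorem mul_red_word (w₁ : List (Ltr G)) {w₂ : List (Ltr G)} (h₂ : Red Γ w₂) :
    ∃ u, Red Γ u ∧ wprod Γ u = wprod Γ w₁ * wprod Γ w₂ ∧
      ∀ l ∈ u, (∃ l' ∈ w₁, l'.1 = l.1) ∨ (∃ l' ∈ w₂, l'.1 = l.1) := by
  induction w₁ with
  | nil =>
    exact ⟨w₂, h₂, by rw [wprod_nil, one_mul], fun l hl => Or.inr ⟨l, hl, rfl⟩⟩
  | cons x t ih =>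
    obtain ⟨u, hu, hup, hum⟩ := ih
    refine ⟨act Γ x u, act_red Γ x hu, ?_, ?_⟩
    · rw [act_wprod, hup, wprod_cons, mul_assoc]
    · intro l hl
      rcases act_mem Γ x u l hl with h | h
      · exact Or.inl ⟨x, List.mem_cons_self, h.symm⟩
      · rcases hum l h with h' | h'
        · obtain ⟨l', hl', he⟩ := h'
          exact Or.inl ⟨l', List.mem_cons_of_mem _ hl', he⟩
        · exact Or.inr h'

theorem of_red_word (v : V) (a : G v) :
    ∃ w, Red Γ w ∧ wprod Γ w = GraphProduct.of Γ G v a ∧ ∀ l ∈ w, l.1 = v := by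
  by_cases ha : a = 1
  · exact ⟨[], trivial, by rw [wprod_nil, ha, map_one], by simp⟩
  · refine ⟨[⟨v, a⟩], ⟨ha, trivial, trivial⟩, by simp [wprod], by simp⟩

theorem mem_span_exists_word {Λ : Set V} {g : GraphProduct Γ G}
    (hg : g ∈ spanSubgroup Γ G Λ) :
    ∃ w, Red Γ w ∧ wprod Γ w = g ∧ ∀ l ∈ w, l.1 ∈ Λ := by
  refine Subgroup.iSup_induction (x := g)
    (fun v => ⨆ _ : v ∈ Λ, vertexSubgroup Γ G v)
    (C := fun g => ∃ w, Red Γ w ∧ wprod Γ w = g ∧ ∀ l ∈ w, l.1 ∈ Λ) hg ?_ ?_ ?_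
  · intro v x hx
    have hx' : x ∈ ⨆ _ : v ∈ Λ, vertexSubgroup Γ G v := hx
    by_cases hv : v ∈ Λ
    · rw [iSup_pos hv] at hx'
      obtain ⟨a, rfl⟩ := hx'
      obtain ⟨w, hw, hwp, hwm⟩ := of_red_word Γ v a
      exact ⟨w, hw, hwp, fun l hl => (hwm l hl) ▸ hv⟩
    · rw [iSup_neg hv] at hx'
      rw [Subgroup.mem_bot.mp hx']
      exact ⟨[], trivial, by rw [wprod_nil], by simp⟩
  · exact ⟨[], trivial, by rw [wprod_nil], by simp⟩
  · intro a b ⟨w₁, hw₁, hp₁, hm₁⟩ ⟨w₂, hw₂, hp₂, hm₂⟩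
    obtain ⟨u, hu, hup, hum⟩ := mul_red_word Γ w₁ hw₂
    refine ⟨u, hu, by rw [hup, hp₁, hp₂], ?_⟩
    intro l hl
    rcases hum l hl with ⟨l', hl', he⟩ | ⟨l', hl', he⟩
    · exact he ▸ hm₁ l' hl'
    · exact he ▸ hm₂ l' hl'

theorem exists_red_word (g : GraphProduct Γ G) : ∃ w, Red Γ w ∧ wprod Γ w = g := by
  obtain ⟨y, rfl⟩ := QuotientGroup.mk'_surjective _ g
  induction y using Monoid.CoprodI.induction_on with
  | one => exact ⟨[], trivial, by rw [wprod_nil, map_one]⟩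
  | of v a =>
    obtain ⟨w, hw, hwp, _⟩ := of_red_word Γ v a
    exact ⟨w, hw, hwp⟩
  | mul a b iha ihb =>
    obtain ⟨w₁, hw₁, hp₁⟩ := iha
    obtain ⟨w₂, hw₂, hp₂⟩ := ihb
    obtain ⟨u, hu, hup, _⟩ := mul_red_word Γ w₁ hw₂
    refine ⟨u, hu, ?_⟩
    rw [hup, hp₁, hp₂, map_mul]

variable (G) in
noncomputable def projF (v : V) : Monoid.CoprodI G →* G v :=
  Monoid.CoprodI.lift (fun u =>
    if h : u = v then
      { toFun := fun g => h ▸ g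
        map_one' := by subst h; rfl
        map_mul' := by subst h; intros; rfl }
    else 1)

theorem projF_of_self (v : V) (a : G v) : projF G v (Monoid.CoprodI.of a) = a := by
  rw [projF, Monoid.CoprodI.lift_of, dif_pos rfl]
  rfl

theorem projF_of_ne {u v : V} (h : u ≠ v) (a : G u) :
    projF G v (Monoid.CoprodI.of a) = 1 := by
  rw [projF, Monoid.CoprodI.lift_of, dif_neg h]
  rfl

theorem projF_rels {v : V} {r : Monoid.CoprodI G} (hr : r ∈ graphProductRels Γ G) :
    projF G v r = 1 := by
  obtain ⟨u, u', g, h, hA, rfl⟩ := hr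
  rw [map_mul, map_mul, map_mul, map_inv, map_inv]
  by_cases hu : u = v
  · have hu' : u' ≠ v := fun e => hA.ne (hu.trans e.symm)
    rw [projF_of_ne hu']
    simp
  · rw [projF_of_ne hu]
    simp

variable (G) in
noncomputable def projHom (v : V) : GraphProduct Γ G →* G v :=
  QuotientGroup.lift _ (projF G v)
    (by
      intro r hr
      have hle : Subgroup.normalClosure (graphProductRels Γ G) ≤ (projF G v).ker :=
        Subgroup.normalClosure_le_normal (fun x hx => projF_rels Γ hx)
      exact hle hr)

theorem projHom_of_self (v : V) (a : G v) :
    projHom Γ G v (GraphProduct.of Γ G v a) = a := by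
  show projHom Γ G v (QuotientGroup.mk' _ (Monoid.CoprodI.of a)) = a
  rw [QuotientGroup.mk'_apply]
  show projF G v (Monoid.CoprodI.of a) = a
  exact projF_of_self v a

theorem projHom_of_ne {u v : V} (h : u ≠ v) (a : G u) :
    projHom Γ G v (GraphProduct.of Γ G u a) = 1 := by
  show projHom Γ G v (QuotientGroup.mk' _ (Monoid.CoprodI.of a)) = 1
  rw [QuotientGroup.mk'_apply]
  show projF G v (Monoid.CoprodI.of a) = 1
  exact projF_of_ne h a

theorem projHom_span {Λ : Set V} {v : V} (hv : v ∉ Λ) {g : GraphProduct Γ G}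
    (hg : g ∈ spanSubgroup Γ G Λ) : projHom Γ G v g = 1 := by
  obtain ⟨w, hw, rfl, hm⟩ := mem_span_exists_word Γ hg
  clear hw hg
  induction w with
  | nil => rw [wprod_nil, map_one]
  | cons x t ih =>
    rw [wprod_cons, map_mul, ih (fun l hl => hm l (List.mem_cons_of_mem _ hl)), mul_one]
    exact projHom_of_ne Γ (u := x.1) (v := v)
      (fun e => hv (e ▸ hm x (List.mem_cons_self))) x.2

theorem subset_of_conj [∀ v, Nontrivial (G v)] {Λ₁ Λ₂ : Set V} {g : GraphProduct Γ G}
    (h : spanSubgroup Γ G Λ₁ ≤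
      Subgroup.map (MulAut.conj g).toMonoidHom (spanSubgroup Γ G Λ₂)) :
    Λ₁ ⊆ Λ₂ := by
  intro v hv
  by_contra hvn
  obtain ⟨a, ha⟩ := exists_ne (1 : G v)
  have h1 : GraphProduct.of Γ G v a ∈ spanSubgroup Γ G Λ₁ :=
    vertex_le_span Γ hv ⟨a, rfl⟩
  obtain ⟨s, hs, he⟩ := h h1
  have he' : g * s * g⁻¹ = GraphProduct.of Γ G v a := he
  have h2 := congrArg (projHom Γ G v) he'
  rw [map_mul, map_mul, map_inv, projHom_span Γ hvn hs, mul_one, mul_inv_cancel,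
    projHom_of_self Γ v a] at h2
  exact ha h2.symm

def linv (l : Ltr G) : Ltr G := ⟨l.1, l.2⁻¹⟩

def revinv (w : List (Ltr G)) : List (Ltr G) := (w.map linv).reverse

@[simp] theorem revinv_nil : revinv ([] : List (Ltr G)) = [] := rfl

theorem revinv_cons (y : Ltr G) (t : List (Ltr G)) :
    revinv (y :: t) = revinv t ++ [linv y] := by
  simp [revinv]

theorem wprod_revinv (w : List (Ltr G)) : wprod Γ (revinv w) = (wprod Γ w)⁻¹ := by
  induction w with
  | nil => simp
  | cons y t ih =>
    rw [revinv_cons, wprod_append, ih]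
    have h1 : wprod Γ [linv y] = (GraphProduct.of Γ G y.1 y.2)⁻¹ := by
      rw [wprod_cons, wprod_nil, mul_one]
      exact map_inv _ _
    rw [h1, wprod_cons, mul_inv_rev]

theorem pileup {u : List (Ltr G)} (hu : Red Γ u) :
    ∀ {s : List (Ltr G)}, Red Γ s →
    (∀ (a : List (Ltr G)) (y : Ltr G) (b : List (Ltr G)), u = a ++ y :: b →
      (∀ z ∈ a, Γ.Adj y.1 z.1) → NoF Γ y.1 s) →
    Red Γ (revinv u ++ s) := by
  induction u with
  | nil =>
    intro s hs _
    simpa using hs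
  | cons y t ih =>
    intro s hs hd
    obtain ⟨hy2, hynf, hredt⟩ : y.2 ≠ 1 ∧ NoF Γ y.1 t ∧ Red Γ t := hu
    rw [revinv_cons, List.append_assoc, List.singleton_append]
    refine ih hredt ?_ ?_
    · refine ⟨inv_ne_one.mpr hy2, ?_, hs⟩
      exact hd [] y t rfl (by simp)
    · intro a y' b he hadj
      constructor
      · -- (linv y).1 = y.1 ≠ y'.1
        intro hee
        have hee' : y'.1 = y.1 := hee.symm
        refine (NoF_iff Γ t).mp hynf ⟨a, y', b, he, hee', ?_⟩
        intro z hz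
        have := hadj z hz
        rwa [hee'] at this
      · intro hA
        refine hd (y :: a) y' b (by rw [he]; rfl) ?_
        intro z hz
        rcases List.mem_cons.mp hz with rfl | hz
        · exact hA
        · exact hadj z hz

theorem gamma_red {v : V} {x : G v} (hx : x ≠ 1) {w : List (Ltr G)} (hred : Red Γ w)
    (hno : ∀ (a : List (Ltr G)) (y : Ltr G) (b : List (Ltr G)), w = a ++ y :: b →
      (∀ z ∈ a, Γ.Adj y.1 z.1) → y.1 ≠ v ∧ ¬ Γ.Adj y.1 v) :
    Red Γ (revinv w ++ ((⟨v, x⟩ : Ltr G) :: w)) := by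
  have hnfv : NoF Γ v w := by
    rw [NoF_iff]
    rintro ⟨a, y, b, he, hyv, hadj⟩
    exact (hno a y b he (fun z hz => hyv ▸ hadj z hz)).1 hyv
  have hxw : Red Γ ((⟨v, x⟩ : Ltr G) :: w) := ⟨hx, hnfv, hred⟩
  refine pileup Γ hred hxw ?_
  intro a y b he hadj
  obtain ⟨hne, hnadj⟩ := hno a y b he hadj
  exact ⟨fun e => hne e.symm, fun hA => absurd hA hnadj⟩

theorem sheq_extract {a b : List (Ltr G)} {y : Ltr G}
    (hadj : ∀ z ∈ a, Γ.Adj y.1 z.1) :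
    ShEq Γ (a ++ y :: b) (y :: (a ++ b)) := by
  induction a with
  | nil => exact ShEq.refl Γ _
  | cons c a' ih =>
    have h1 : ShEq Γ (a' ++ y :: b) (y :: (a' ++ b)) :=
      ih (fun z hz => hadj z (List.mem_cons_of_mem _ hz))
    refine (ShEq.cons Γ c h1).trans' Γ ?_
    exact ShEq.swap Γ c y (a' ++ b) (hadj c (List.mem_cons_self)).symm

theorem conj_conj (A B X : GraphProduct Γ G) :
    (A * B)⁻¹ * X * (A * B) = B⁻¹ * (A⁻¹ * X * A) * B := by group

theorem comm_all {v : V} {t : List (Ltr G)} (h : ∀ l ∈ t, Γ.Adj l.1 v) (d : G v) :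
    GraphProduct.of Γ G v d * wprod Γ t = wprod Γ t * GraphProduct.of Γ G v d := by
  induction t with
  | nil => simp
  | cons l t' ih =>
    rw [wprod_cons, ← mul_assoc, ← of_comm Γ (h l (List.mem_cons_self)) l.2 d,
      mul_assoc, ih (fun l' hl' => h l' (List.mem_cons_of_mem _ hl')), ← mul_assoc]

theorem main_lemma [∀ v, Nontrivial (G v)] {Λ₂ : Set V} :
    ∀ (n : ℕ) (w : List (Ltr G)), w.length = n → Red Γ w →
      (∀ q ∈ spanSubgroup Γ G Λ₂, ∀ u, Red Γ u → wprod Γ u = wprod Γ w * q →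
        w.length ≤ u.length) →
      ∀ v : V, v ∈ Λ₂ →
      (∀ x : G v, (wprod Γ w)⁻¹ * GraphProduct.of Γ G v x * wprod Γ w ∈
        spanSubgroup Γ G Λ₂) →
      ∀ l ∈ w, Γ.Adj l.1 v := by
  intro n
  induction n using Nat.strong_induction_on with
  | _ n ih =>
    intro w hlen hred hmin v hv hconj
    by_cases hP1 : ∃ (a : List (Ltr G)) (y : Ltr G) (b : List (Ltr G)),
        w = a ++ y :: b ∧ (∀ z ∈ a, Γ.Adj y.1 z.1) ∧ Γ.Adj y.1 v
    · obtain ⟨a, y, b, he, hadj, hAyv⟩ := hP1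
      subst he
      have hsh : ShEq Γ (a ++ y :: b) (y :: (a ++ b)) := sheq_extract Γ hadj
      obtain ⟨hy2, hynf, hredt⟩ :
          y.2 ≠ 1 ∧ NoF Γ y.1 (a ++ b) ∧ Red Γ (a ++ b) :=
        (ShEq.red_iff Γ hsh).mp hred
      have hw : wprod Γ (a ++ y :: b) =
          GraphProduct.of Γ G y.1 y.2 * wprod Γ (a ++ b) := by
        rw [ShEq.wprod_eq Γ hsh, wprod_cons]
      have hlen2 : (a ++ y :: b).length = (a ++ b).length + 1 := by
        have := (hsh.perm Γ).length_eq
        simpa using this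
      have hmin' : ∀ q ∈ spanSubgroup Γ G Λ₂, ∀ u, Red Γ u →
          wprod Γ u = wprod Γ (a ++ b) * q → (a ++ b).length ≤ u.length := by
        intro q hq u hredu hueq
        have h1 : wprod Γ (act Γ y u) = wprod Γ (a ++ y :: b) * q := by
          rw [act_wprod, hueq, hw, mul_assoc]
        have h2 := hmin q hq (act Γ y u) (act_red Γ y hredu) h1
        have h3 := act_length_le Γ y u
        omega
      have hconj' : ∀ x : G v,
          (wprod Γ (a ++ b))⁻¹ * GraphProduct.of Γ G v x * wprod Γ (a ++ b) ∈
            spanSubgroup Γ G Λ₂ := by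
        intro x
        have h0 := hconj x
        rw [hw, conj_conj] at h0
        have h1 : (GraphProduct.of Γ G y.1 y.2)⁻¹ * GraphProduct.of Γ G v x *
            GraphProduct.of Γ G y.1 y.2 = GraphProduct.of Γ G v x := by
          rw [mul_assoc, ← of_comm Γ hAyv y.2 x, ← mul_assoc, inv_mul_cancel, one_mul]
        rw [h1] at h0
        exact h0
      have hIH := ih (a ++ b).length (by omega) (a ++ b) rfl hredt hmin' v hv hconj'
      intro l hl
      rcases List.mem_cons.mp ((hsh.perm Γ).mem_iff.mp hl) with rfl | hl'
      · exact hAyv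
      · exact hIH l hl'
    · by_cases hP2 : ∃ (a : List (Ltr G)) (y : Ltr G) (b : List (Ltr G)),
          w = a ++ y :: b ∧ (∀ z ∈ a, Γ.Adj y.1 z.1) ∧ y.1 = v
      · exfalso
        obtain ⟨a, y, b, he, hadj, hyv⟩ := hP2
        obtain ⟨yv, c⟩ := y
        have hyv' : yv = v := hyv
        subst hyv'
        subst he
        have hsh : ShEq Γ (a ++ (⟨yv, c⟩ : Ltr G) :: b) ((⟨yv, c⟩ : Ltr G) :: (a ++ b)) :=
          sheq_extract Γ hadj
        obtain ⟨hy2, hynf, hredt⟩ :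
            c ≠ 1 ∧ NoF Γ yv (a ++ b) ∧ Red Γ (a ++ b) :=
          (ShEq.red_iff Γ hsh).mp hred
        have hw : wprod Γ (a ++ (⟨yv, c⟩ : Ltr G) :: b) =
            GraphProduct.of Γ G yv c * wprod Γ (a ++ b) := by
          rw [ShEq.wprod_eq Γ hsh, wprod_cons]
        have hlen2 : (a ++ (⟨yv, c⟩ : Ltr G) :: b).length = (a ++ b).length + 1 := by
          have := (hsh.perm Γ).length_eq
          simpa using this
        have hmin' : ∀ q ∈ spanSubgroup Γ G Λ₂, ∀ u, Red Γ u →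
            wprod Γ u = wprod Γ (a ++ b) * q → (a ++ b).length ≤ u.length := by
          intro q hq u hredu hueq
          have h1 : wprod Γ (act Γ (⟨yv, c⟩ : Ltr G) u) =
              wprod Γ (a ++ (⟨yv, c⟩ : Ltr G) :: b) * q := by
            rw [act_wprod, hueq, hw, mul_assoc]
          have h2 := hmin q hq _ (act_red Γ (⟨yv, c⟩ : Ltr G) hredu) h1
          have h3 := act_length_le Γ (⟨yv, c⟩ : Ltr G) u
          omega
        have hconj' : ∀ x : G yv,
            (wprod Γ (a ++ b))⁻¹ * GraphProduct.of Γ G yv x * wprod Γ (a ++ b) ∈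
              spanSubgroup Γ G Λ₂ := by
          intro x
          have h0 := hconj (c * x * c⁻¹)
          rw [hw, conj_conj] at h0
          have h1 : (GraphProduct.of Γ G yv c)⁻¹ *
              GraphProduct.of Γ G yv (c * x * c⁻¹) * GraphProduct.of Γ G yv c =
              GraphProduct.of Γ G yv x := by
            rw [← map_inv, ← map_mul, ← map_mul]
            congr 1
            group
          rw [h1] at h0
          exact h0
        have hIH := ih (a ++ b).length (by omega) (a ++ b) rfl hredt hmin' yv hv hconj'
        have hcm := comm_all Γ hIH c
        have hq : (GraphProduct.of Γ G yv c)⁻¹ ∈ spanSubgroup Γ G Λ₂ :=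
          inv_mem (vertex_le_span Γ hv ⟨c, rfl⟩)
        have heq : wprod Γ (a ++ b) =
            wprod Γ (a ++ (⟨yv, c⟩ : Ltr G) :: b) * (GraphProduct.of Γ G yv c)⁻¹ := by
          rw [hw, hcm, mul_assoc, mul_inv_cancel, mul_one]
        have hfin := hmin _ hq (a ++ b) hredt heq
        omega
      · obtain ⟨x, hx⟩ := exists_ne (1 : G v)
        have hno : ∀ (a : List (Ltr G)) (y : Ltr G) (b : List (Ltr G)),
            w = a ++ y :: b → (∀ z ∈ a, Γ.Adj y.1 z.1) →
            y.1 ≠ v ∧ ¬ Γ.Adj y.1 v := by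
          intro a y b he hadj
          exact ⟨fun e => hP2 ⟨a, y, b, he, hadj, e⟩, fun e => hP1 ⟨a, y, b, he, hadj, e⟩⟩
        have hWred := gamma_red Γ hx hred hno
        have hWp : wprod Γ (revinv w ++ ((⟨v, x⟩ : Ltr G) :: w)) =
            (wprod Γ w)⁻¹ * GraphProduct.of Γ G v x * wprod Γ w := by
          rw [wprod_append, wprod_revinv, wprod_cons, ← mul_assoc]
        obtain ⟨w₂, hw₂red, hw₂p, hw₂m⟩ := mem_span_exists_word Γ (hconj x)
        have hperm := red_unique_perm Γ hWred hw₂red (by rw [hWp, hw₂p])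
        have hwm : ∀ l ∈ w, l.1 ∈ Λ₂ := by
          intro l hl
          refine hw₂m l (hperm.mem_iff.mp ?_)
          exact List.mem_append_right _ (List.mem_cons_of_mem _ hl)
        have hmem : wprod Γ w ∈ spanSubgroup Γ G Λ₂ := wprod_mem_span Γ hwm
        have h0 := hmin (wprod Γ w)⁻¹ (inv_mem hmem) [] trivial
          (by rw [wprod_nil, mul_inv_cancel])
        have hwnil : w = [] := List.eq_nil_of_length_eq_zero (by simpa using h0)
        intro l hl
        rw [hwnil] at hl
        exact absurd hl List.not_mem_nil
end GPAux

open GPAux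

/-- **Lemma.** If `⟨Λ₁⟩ ⊆ g⟨Λ₂⟩g⁻¹` then `Λ₁ ⊆ Λ₂` and
`g ∈ ⟨Λ₁⟩ · ⟨link(Λ₁)⟩ · ⟨Λ₂⟩`. -/
theorem span_le_conj_span {V : Type} [Fintype V]
    (Γ : SimpleGraph V) (G : V → Type) [∀ v, Group (G v)] [∀ v, Nontrivial (G v)]
    (Λ₁ Λ₂ : Set V) (g : GraphProduct Γ G)
    (h : spanSubgroup Γ G Λ₁ ≤
      Subgroup.map (MulAut.conj g).toMonoidHom (spanSubgroup Γ G Λ₂)) :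
    Λ₁ ⊆ Λ₂ ∧
      g ∈ (spanSubgroup Γ G Λ₁ : Set (GraphProduct Γ G)) *
        (spanSubgroup Γ G (linkSet Γ Λ₁) : Set (GraphProduct Γ G)) *
        (spanSubgroup Γ G Λ₂ : Set (GraphProduct Γ G)) := by
  have hsub : Λ₁ ⊆ Λ₂ := subset_of_conj Γ h
  refine ⟨hsub, ?_⟩
  -- the set of lengths of reduced words for elements of the coset g • ⟨Λ₂⟩
  set S : Set ℕ := {n : ℕ | ∃ q ∈ spanSubgroup Γ G Λ₂,
    ∃ u, Red Γ u ∧ wprod Γ u = g * q ∧ u.length = n} with hSdef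
  have hS : S.Nonempty := by
    obtain ⟨u, hured, hup⟩ := exists_red_word Γ g
    exact ⟨u.length, 1, one_mem _, u, hured, by rw [hup, mul_one], rfl⟩
  obtain ⟨q₀, hq₀, u₀, hu₀red, hu₀p, hu₀len⟩ := Nat.sInf_mem hS
  have hmin : ∀ q ∈ spanSubgroup Γ G Λ₂, ∀ u, Red Γ u →
      wprod Γ u = wprod Γ u₀ * q → u₀.length ≤ u.length := by
    intro q hq u hru hup
    have hmem : u.length ∈ S := by
      refine ⟨q₀ * q, mul_mem hq₀ hq, u, hru, ?_, rfl⟩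
      rw [hup, hu₀p, mul_assoc]
    rw [hu₀len]
    exact Nat.sInf_le hmem
  have hML : ∀ l ∈ u₀, l.1 ∈ linkSet Γ Λ₁ := by
    intro l hl v hv
    have hv₂ : v ∈ Λ₂ := hsub hv
    have hconj : ∀ x : G v,
        (wprod Γ u₀)⁻¹ * GraphProduct.of Γ G v x * wprod Γ u₀ ∈ spanSubgroup Γ G Λ₂ := by
      intro x
      have hx1 : GraphProduct.of Γ G v x ∈ spanSubgroup Γ G Λ₁ :=
        vertex_le_span Γ hv ⟨x, rfl⟩
      obtain ⟨s, hs, he⟩ := h hx1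
      have he' : g * s * g⁻¹ = GraphProduct.of Γ G v x := he
      have hgs : g⁻¹ * GraphProduct.of Γ G v x * g = s := by
        rw [← he']
        group
      rw [hu₀p, conj_conj, hgs]
      exact mul_mem (mul_mem (inv_mem hq₀) hs) hq₀
    exact main_lemma Γ u₀.length u₀ rfl hu₀red hmin v hv₂ hconj l hl
  have hm : wprod Γ u₀ ∈ spanSubgroup Γ G (linkSet Γ Λ₁) := wprod_mem_span Γ hML
  have hgeq : g = 1 * wprod Γ u₀ * q₀⁻¹ := by
    rw [one_mul, hu₀p, mul_assoc, mul_inv_cancel, mul_one]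
  rw [hgeq]
  exact Set.mul_mem_mul (Set.mul_mem_mul (one_mem _) hm) (inv_mem hq₀)
end

section
/- Let Γ be a finite simplicial graph and 𝒢 = (G_v)_{v∈V} a family of nontrivial groups, and let X(Γ,𝒢) be the Cayley graph of Γ𝒢 with respect to the generating set ⋃_{v∈V} (Ĝ_v ∖ {1}). If x, y, z ∈ Γ𝒢 are pairwise adjacent in X(Γ,𝒢), then there exists a single vertex v ∈ V such that x⁻¹y, y⁻¹z and x⁻¹z all belong to Ĝ_v. -/
open scoped Pointwise

section Retraction

variable {V : Type} (Γ : SimpleGraph V) (G : V → Type) [∀ v, Group (G v)]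

/-- The family of homomorphisms sending `G v` to itself and other vertex groups to `1`. -/
noncomputable def toVertexHom (v w : V) : G w →* G v :=
  open scoped Classical in
  if h : w = v then (by subst h; exact MonoidHom.id (G w)) else 1

@[simp] lemma toVertexHom_same (v : V) : toVertexHom G v v = MonoidHom.id (G v) := by
  simp [toVertexHom]

lemma toVertexHom_ne (v w : V) (h : w ≠ v) : toVertexHom G v w = 1 := by
  simp [toVertexHom, h]

/-- The retraction of the graph product onto the vertex group `G v`. -/
noncomputable def retr (v : V) : GraphProduct Γ G →* G v :=
  QuotientGroup.lift _ (Monoid.CoprodI.lift (toVertexHom G v)) (by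
    refine Subgroup.normalClosure_le_normal ?_
    rintro x ⟨a, b, g, h, hab, rfl⟩
    have hne : a ≠ b := hab.ne
    simp only [SetLike.mem_coe, MonoidHom.mem_ker, map_mul, map_inv,
      Monoid.CoprodI.lift_of]
    rcases eq_or_ne a v with rfl | ha
    · rw [toVertexHom_ne G a b (fun hb => hne hb.symm)]
      simp
    · rw [toVertexHom_ne G v a ha]
      simp)

lemma retr_of_same (v : V) (g : G v) : retr Γ G v (GraphProduct.of Γ G v g) = g := by
  simp [retr, GraphProduct.of]

lemma retr_of_ne (v w : V) (h : w ≠ v) (g : G w) :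
    retr Γ G v (GraphProduct.of Γ G w g) = 1 := by
  simp [retr, GraphProduct.of, toVertexHom_ne G v w h]

end Retraction

/-- **Fact.** The edges of a triangle in `X(Γ,𝒢)` are labelled by elements of a common
vertex group. -/
theorem triangle_common_vertex_group {V : Type} [Fintype V]
    (Γ : SimpleGraph V) (G : V → Type) [∀ v, Group (G v)] [∀ v, Nontrivial (G v)]
    (x y z : GraphProduct Γ G)
    (hxy : (cayley Γ G).Adj x y) (hyz : (cayley Γ G).Adj y z) (hxz : (cayley Γ G).Adj x z) :
    ∃ v : V, x⁻¹ * y ∈ vertexSubgroup Γ G v ∧ y⁻¹ * z ∈ vertexSubgroup Γ G v ∧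
      x⁻¹ * z ∈ vertexSubgroup Γ G v := by
  obtain ⟨hxyne, u, g, hg⟩ := hxy
  obtain ⟨hyzne, v, h, hh⟩ := hyz
  obtain ⟨hxzne, w, k, hk⟩ := hxz
  have hprod : (x⁻¹ * y) * (y⁻¹ * z) = x⁻¹ * z := by group
  rcases eq_or_ne u v with rfl | huv
  · refine ⟨u, ⟨g, hg⟩, ⟨h, hh⟩, ?_⟩
    rw [← hprod]
    exact (vertexSubgroup Γ G u).mul_mem ⟨g, hg⟩ ⟨h, hh⟩
  · exfalso
    have hg1 : g ≠ 1 := by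
      rintro rfl
      exact hxyne (inv_mul_eq_one.mp (by rw [← hg]; simp))
    have hh1 : h ≠ 1 := by
      rintro rfl
      exact hyzne (inv_mul_eq_one.mp (by rw [← hh]; simp))
    -- apply retraction onto u
    have hwu : w = u := by
      by_contra hwu
      have h1 : retr Γ G u (x⁻¹ * z) = 1 := by
        rw [← hk]; exact retr_of_ne Γ G u w hwu k
      have h2 : retr Γ G u (x⁻¹ * z) = g := by
        rw [← hprod, map_mul, ← hg, ← hh, retr_of_same,
          retr_of_ne Γ G u v (fun hv => huv hv.symm), mul_one]
      exact hg1 (h2.symm.trans h1)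
    have hwv : w = v := by
      by_contra hwv
      have h1 : retr Γ G v (x⁻¹ * z) = 1 := by
        rw [← hk]; exact retr_of_ne Γ G v w hwv k
      have h2 : retr Γ G v (x⁻¹ * z) = h := by
        rw [← hprod, map_mul, ← hg, ← hh, retr_of_same,
          retr_of_ne Γ G v u huv, one_mul]
      exact hh1 (h2.symm.trans h1)
    exact huv (hwu ▸ hwv)
end

section
/- Let Γ be a finite simplicial graph and 𝒢 = (G_v)_{v∈V} a family of nontrivial groups, and let X(Γ,𝒢) be the Cayley graph of Γ𝒢 with respect to the generating set ⋃_{v∈V} (Ĝ_v ∖ {1}), with graph distance d. For every u ∈ V and every g ∈ Γ𝒢, there exists a unique h ∈ Ĝ_u such that d(g,h) ≤ d(g,k) for all k ∈ Ĝ_u. -/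
open scoped Pointwise

namespace GPNF
set_option linter.unusedSectionVars false

variable {V : Type} (Γ : SimpleGraph V) (G : V → Type) [∀ v, Group (G v)]

abbrev W := List ((v : V) × G v)

open scoped Classical in
noncomputable def pull (v : V) : W G → Option (G v × W G)
  | [] => none
  | l :: t => if h : l.1 = v then some (h ▸ l.2, t)
      else if Γ.Adj l.1 v then (pull v t).map (fun p => (p.1, l :: p.2)) else none

variable {Γ G}

@[simp] lemma pull_nil (v : V) : pull Γ G v [] = none := rfl

lemma pull_cons_self (v : V) (g : G v) (t : W G) :
    pull Γ G v (⟨v, g⟩ :: t) = some (g, t) := by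
  rw [pull, dif_pos rfl]

lemma pull_cons_adj {v : V} (l : (v : V) × G v) (t : W G) (h1 : l.1 ≠ v)
    (h2 : Γ.Adj l.1 v) :
    pull Γ G v (l :: t) = (pull Γ G v t).map (fun p => (p.1, l :: p.2)) := by
  rw [pull, dif_neg h1, if_pos h2]

lemma pull_cons_nadj {v : V} (l : (v : V) × G v) (t : W G) (h1 : l.1 ≠ v)
    (h2 : ¬ Γ.Adj l.1 v) :
    pull Γ G v (l :: t) = none := by
  rw [pull, dif_neg h1, if_neg h2]

variable (Γ G)

def Red : W G → Prop
  | [] => True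
  | l :: t => l.2 ≠ 1 ∧ pull Γ G l.1 t = none ∧ Red t

@[simp] lemma red_nil : Red Γ G ([] : W G) := trivial

lemma red_cons {l : (v : V) × G v} {t : W G} (h1 : l.2 ≠ 1)
    (h2 : pull Γ G l.1 t = none) (h3 : Red Γ G t) : Red Γ G (l :: t) :=
  ⟨h1, h2, h3⟩

lemma Red.tail {l : (v : V) × G v} {t : W G} (h : Red Γ G (l :: t)) : Red Γ G t := h.2.2

inductive Stp : W G → W G → Prop
  | swap (a b : (v : V) × G v) (t : W G) (h : Γ.Adj a.1 b.1) :
      Stp (a :: b :: t) (b :: a :: t)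
  | cons (a : (v : V) × G v) {t t' : W G} : Stp t t' → Stp (a :: t) (a :: t')

def Eqv : W G → W G → Prop := Relation.EqvGen (Stp Γ G)

variable {Γ G}

lemma Eqv.refl (w : W G) : Eqv Γ G w w := Relation.EqvGen.refl w
lemma Eqv.symm {w w' : W G} (h : Eqv Γ G w w') : Eqv Γ G w' w := Relation.EqvGen.symm _ _ h
lemma Eqv.trans {a b c : W G} (h : Eqv Γ G a b) (h' : Eqv Γ G b c) : Eqv Γ G a c :=
  Relation.EqvGen.trans _ _ _ h h'
lemma Stp.eqv {w w' : W G} (h : Stp Γ G w w') : Eqv Γ G w w' := Relation.EqvGen.rel _ _ h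

lemma Eqv.cons (a : (v : V) × G v) {t t' : W G} (h : Eqv Γ G t t') :
    Eqv Γ G (a :: t) (a :: t') := by
  induction h with
  | rel x y hxy => exact Relation.EqvGen.rel _ _ (Stp.cons a hxy)
  | refl x => exact Relation.EqvGen.refl _
  | symm x y _ ih => exact ih.symm
  | trans x y z _ _ ih1 ih2 => exact ih1.trans ih2

lemma Stp.length_eq {w w' : W G} (h : Stp Γ G w w') : w.length = w'.length := by
  induction h with
  | swap a b t h => simp
  | cons a _ ih => simp [ih]

lemma Eqv.length_eq {w w' : W G} (h : Eqv Γ G w w') : w.length = w'.length := by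
  induction h with
  | rel x y hxy => exact hxy.length_eq
  | refl x => rfl
  | symm x y _ ih => exact ih.symm
  | trans x y z _ _ ih1 ih2 => exact ih1.trans ih2


variable (Γ G)

/-- Two words have related pull results at `v`. -/
def PullRel (v : V) (w w' : W G) : Prop :=
  (pull Γ G v w = none ∧ pull Γ G v w' = none) ∨
  ∃ h t t', pull Γ G v w = some (h, t) ∧ pull Γ G v w' = some (h, t') ∧ Eqv Γ G t t'

variable {Γ G}

lemma PullRel.refl (v : V) (w : W G) : PullRel Γ G v w w := by
  rcases hp : pull Γ G v w with _ | ⟨h, t⟩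
  · exact Or.inl ⟨hp, hp⟩
  · exact Or.inr ⟨h, t, t, hp, hp, Eqv.refl _⟩

lemma PullRel.symm {v : V} {w w' : W G} (h : PullRel Γ G v w w') : PullRel Γ G v w' w := by
  rcases h with ⟨h1, h2⟩ | ⟨a, t, t', h1, h2, h3⟩
  · exact Or.inl ⟨h2, h1⟩
  · exact Or.inr ⟨a, t', t, h2, h1, h3.symm⟩

lemma PullRel.trans {v : V} {w₁ w₂ w₃ : W G} (h : PullRel Γ G v w₁ w₂)
    (h' : PullRel Γ G v w₂ w₃) : PullRel Γ G v w₁ w₃ := by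
  rcases h with ⟨h1, h2⟩ | ⟨a, t, t', h1, h2, h3⟩
  · rcases h' with ⟨h1', h2'⟩ | ⟨a', s, s', h1', h2', h3'⟩
    · exact Or.inl ⟨h1, h2'⟩
    · rw [h2] at h1'; simp at h1'
  · rcases h' with ⟨h1', h2'⟩ | ⟨a', s, s', h1', h2', h3'⟩
    · rw [h2] at h1'; simp at h1'
    · rw [h2] at h1'
      injection h1' with h1'
      obtain ⟨rfl, rfl⟩ := Prod.mk.injEq .. ▸ h1'
      exact Or.inr ⟨a, t, s', h1, h2', h3.trans h3'⟩

lemma Stp.pullRel {v : V} {w w' : W G} (h : Stp Γ G w w') : PullRel Γ G v w w' := by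
  induction h with
  | swap a b t hab =>
    obtain ⟨av, ag⟩ := a
    obtain ⟨bv, bg⟩ := b
    simp only at hab ⊢
    by_cases ha : av = v
    · subst ha
      have hb : bv ≠ av := fun hb => (Γ.irrefl (hb ▸ hab))
      have hbv : Γ.Adj bv av := hab.symm
      refine Or.inr ⟨ag, ⟨bv, bg⟩ :: t, ⟨bv, bg⟩ :: t, ?_, ?_, Eqv.refl _⟩
      · rw [pull_cons_self]
      · rw [pull_cons_adj _ _ hb hbv, pull_cons_self]; rfl
    · by_cases hb : bv = v
      · subst hb
        have hav : Γ.Adj av bv := hab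
        refine Or.inr ⟨bg, ⟨av, ag⟩ :: t, ⟨av, ag⟩ :: t, ?_, ?_, Eqv.refl _⟩
        · rw [pull_cons_adj _ _ ha hav, pull_cons_self]; rfl
        · rw [pull_cons_self]
      · by_cases hav : Γ.Adj av v
        · by_cases hbv : Γ.Adj bv v
          · rcases hp : pull Γ G v t with _ | ⟨c, s⟩
            · refine Or.inl ⟨?_, ?_⟩
              · rw [pull_cons_adj _ _ ha hav, pull_cons_adj _ t hb hbv, hp]; rfl
              · rw [pull_cons_adj _ _ hb hbv, pull_cons_adj _ t ha hav, hp]; rfl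
            · refine Or.inr ⟨c, ⟨av, ag⟩ :: ⟨bv, bg⟩ :: s, ⟨bv, bg⟩ :: ⟨av, ag⟩ :: s, ?_, ?_,
                Relation.EqvGen.rel _ _ (Stp.swap ⟨av, ag⟩ ⟨bv, bg⟩ s hab)⟩
              · rw [pull_cons_adj _ _ ha hav, pull_cons_adj _ t hb hbv, hp]; rfl
              · rw [pull_cons_adj _ _ hb hbv, pull_cons_adj _ t ha hav, hp]; rfl
          · refine Or.inl ⟨?_, ?_⟩
            · rw [pull_cons_adj _ _ ha hav, pull_cons_nadj _ t hb hbv]; rfl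
            · exact pull_cons_nadj _ _ hb hbv
        · by_cases hbv : Γ.Adj bv v
          · refine Or.inl ⟨pull_cons_nadj _ _ ha hav, ?_⟩
            rw [pull_cons_adj _ _ hb hbv, pull_cons_nadj _ t ha hav]; rfl
          · exact Or.inl ⟨pull_cons_nadj _ _ ha hav, pull_cons_nadj _ _ hb hbv⟩
  | cons a hst ih =>
    rename_i t t'
    obtain ⟨av, ag⟩ := a
    by_cases ha : av = v
    · subst ha
      exact Or.inr ⟨ag, t, t', pull_cons_self av ag t, pull_cons_self av ag t',
        Relation.EqvGen.rel _ _ hst⟩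
    · by_cases hav : Γ.Adj av v
      · rcases ih with ⟨h1, h2⟩ | ⟨c, s, s', h1, h2, h3⟩
        · refine Or.inl ⟨?_, ?_⟩
          · rw [pull_cons_adj _ _ ha hav, h1]; rfl
          · rw [pull_cons_adj _ _ ha hav, h2]; rfl
        · refine Or.inr ⟨c, ⟨av, ag⟩ :: s, ⟨av, ag⟩ :: s', ?_, ?_, h3.cons _⟩
          · rw [pull_cons_adj _ _ ha hav, h1]; rfl
          · rw [pull_cons_adj _ _ ha hav, h2]; rfl
      · exact Or.inl ⟨pull_cons_nadj _ _ ha hav, pull_cons_nadj _ _ ha hav⟩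

lemma Eqv.pullRel {v : V} {w w' : W G} (h : Eqv Γ G w w') : PullRel Γ G v w w' := by
  induction h with
  | rel x y hxy => exact hxy.pullRel
  | refl x => exact PullRel.refl v x
  | symm x y _ ih => exact ih.symm
  | trans x y z _ _ ih1 ih2 => exact ih1.trans ih2

lemma Eqv.pull_none {v : V} {w w' : W G} (h : Eqv Γ G w w') (hp : pull Γ G v w = none) :
    pull Γ G v w' = none := by
  rcases h.pullRel (v := v) with ⟨h1, h2⟩ | ⟨c, s, s', h1, h2, h3⟩
  · exact h2
  · rw [hp] at h1; simp at h1

/-- Key structural lemma: pulling a letter out of a reduced word. -/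
lemma pull_some {v : V} {w : W G} {p : G v × W G} (hr : Red Γ G w)
    (hp : pull Γ G v w = some p) :
    p.1 ≠ 1 ∧ Red Γ G p.2 ∧ pull Γ G v p.2 = none ∧ Eqv Γ G w (⟨v, p.1⟩ :: p.2) := by
  induction w generalizing p with
  | nil => simp at hp
  | cons l s ih =>
    obtain ⟨lv, lg⟩ := l
    obtain ⟨hne, hl, hrs⟩ := hr
    by_cases hv : lv = v
    · subst hv
      rw [pull_cons_self] at hp
      cases hp
      exact ⟨hne, hrs, hl, Eqv.refl _⟩
    · by_cases hav : Γ.Adj lv v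
      · rw [pull_cons_adj _ _ hv hav] at hp
        rcases hps : pull Γ G v s with _ | ⟨c, t0⟩
        · rw [hps] at hp; simp at hp
        · rw [hps] at hp
          simp only [Option.map_some, Option.some.injEq] at hp
          subst hp
          obtain ⟨hc1, hrt0, hpt0, heqv⟩ := ih hrs hps
          have hne' : (⟨v, c⟩ : (v : V) × G v).1 ≠ lv := fun hh => hv (by simp [← hh])
          have hlt0 : pull Γ G lv t0 = none := by
            have := heqv.pull_none (v := lv) hl
            rw [pull_cons_adj _ _ hne' (Γ.adj_symm hav)] at this
            exact Option.map_eq_none_iff.mp this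
          refine ⟨hc1, ⟨hne, hlt0, hrt0⟩, ?_, ?_⟩
          · rw [pull_cons_adj _ _ hv hav, hpt0]; rfl
          · exact (heqv.cons _).trans
              (Relation.EqvGen.rel _ _ (Stp.swap ⟨lv, lg⟩ ⟨v, c⟩ t0 hav))
      · rw [pull_cons_nadj _ _ hv hav] at hp; simp at hp


lemma pull_length {v : V} {w : W G} {p : G v × W G} (hp : pull Γ G v w = some p) :
    w.length = p.2.length + 1 := by
  induction w generalizing p with
  | nil => simp at hp
  | cons l s ih =>
    obtain ⟨lv, lg⟩ := l
    by_cases hv : lv = v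
    · subst hv
      rw [pull_cons_self] at hp
      cases hp
      simp
    · by_cases hav : Γ.Adj lv v
      · rw [pull_cons_adj _ _ hv hav] at hp
        rcases hps : pull Γ G v s with _ | ⟨c, t0⟩
        · rw [hps] at hp; simp at hp
        · rw [hps] at hp
          simp only [Option.map_some, Option.some.injEq] at hp
          subst hp
          simp [ih hps]
      · rw [pull_cons_nadj _ _ hv hav] at hp; simp at hp

variable (Γ)

open scoped Classical in
noncomputable def pullB (v : V) (w : W G) : G v × W G := (pull Γ G v w).getD (1, w)

open scoped Classical in
noncomputable def consW (v : V) (g : G v) (w : W G) : W G := if g = 1 then w else ⟨v, g⟩ :: w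

open scoped Classical in
noncomputable def actW (v : V) (g : G v) (w : W G) : W G :=
  match pull Γ G v w with
  | some (h, t) => if g * h = 1 then t else ⟨v, g * h⟩ :: t
  | none => if g = 1 then w else ⟨v, g⟩ :: w

variable {Γ}

lemma pullB_none {v : V} {w : W G} (hp : pull Γ G v w = none) : pullB Γ v w = (1, w) := by
  rw [pullB, hp]; rfl

lemma pullB_some {v : V} {w : W G} {p : G v × W G} (hp : pull Γ G v w = some p) :
    pullB Γ v w = p := by
  rw [pullB, hp]; rfl

lemma consW_one (v : V) (w : W G) : consW v 1 w = w := by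
  rw [consW, if_pos rfl]

lemma consW_ne (v : V) {g : G v} (hg : g ≠ 1) (w : W G) : consW v g w = ⟨v, g⟩ :: w := by
  rw [consW, if_neg hg]

lemma pullB_spec {v : V} {w : W G} (hr : Red Γ G w) :
    Red Γ G (pullB Γ v w).2 ∧ pull Γ G v (pullB Γ v w).2 = none ∧
      Eqv Γ G w (consW v (pullB Γ v w).1 (pullB Γ v w).2) ∧
      ((pullB Γ v w).1 = 1 → (pullB Γ v w).2 = w) := by
  rcases hp : pull Γ G v w with _ | p
  · rw [pullB_none hp]
    exact ⟨hr, hp, by rw [consW_one]; exact Eqv.refl _, fun _ => rfl⟩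
  · rw [pullB_some hp]
    obtain ⟨h1, h2, h3, h4⟩ := pull_some hr hp
    exact ⟨h2, h3, by rw [consW_ne _ h1]; exact h4, fun hc => absurd hc h1⟩

lemma consW_red {v : V} {x : G v} {t : W G} (hr : Red Γ G t) (hp : pull Γ G v t = none) :
    Red Γ G (consW v x t) := by
  by_cases hx : x = 1
  · rw [hx, consW_one]; exact hr
  · rw [consW_ne _ hx]; exact ⟨hx, hp, hr⟩

lemma consW_length {v : V} (x : G v) (t : W G) :
    (consW v x t).length ≤ t.length + 1 := by
  by_cases hx : x = 1
  · rw [hx, consW_one]; omega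
  · rw [consW_ne _ hx]; simp

/-- `actW` in terms of `pullB` and `consW`. -/
lemma actW_eq (v : V) (g : G v) (w : W G) :
    actW Γ v g w = consW v (g * (pullB Γ v w).1) (pullB Γ v w).2 := by
  rcases hp : pull Γ G v w with _ | ⟨h, t⟩
  · rw [actW, hp, pullB_none hp]
    simp only [mul_one]
    rfl
  · rw [actW, hp, pullB_some hp]
    rfl

lemma red_actW {v : V} (g : G v) {w : W G} (hr : Red Γ G w) : Red Γ G (actW Γ v g w) := by
  obtain ⟨h1, h2, _, _⟩ := pullB_spec (v := v) hr
  rw [actW_eq]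
  exact consW_red h1 h2

lemma actW_length {v : V} (g : G v) (w : W G) :
    (actW Γ v g w).length ≤ w.length + 1 := by
  rw [actW_eq]
  rcases hp : pull Γ G v w with _ | ⟨h, t⟩
  · rw [pullB_none hp]
    exact consW_length _ _
  · rw [pullB_some hp]
    have h3 : w.length = t.length + 1 := pull_length hp
    calc (consW v (g * h) t).length ≤ t.length + 1 := consW_length _ _
    _ ≤ w.length + 1 := by omega

lemma pullB_consW_self {v : V} (c : G v) {t : W G} (hp : pull Γ G v t = none) :
    pullB Γ v (consW v c t) = (c, t) := by
  by_cases hc : c = 1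
  · rw [hc, consW_one, pullB_none hp]
  · rw [consW_ne _ hc, pullB_some (pull_cons_self v c t)]

lemma actW_one {v : V} {w : W G} (hr : Red Γ G w) : Eqv Γ G (actW Γ v 1 w) w := by
  rw [actW_eq, one_mul]
  exact (pullB_spec hr).2.2.1.symm

lemma actW_mul {v : V} (g g' : G v) {w : W G} (hr : Red Γ G w) :
    actW Γ v g (actW Γ v g' w) = actW Γ v (g * g') w := by
  obtain ⟨h1, h2, _, _⟩ := pullB_spec (v := v) hr
  rw [actW_eq v g', actW_eq, pullB_consW_self _ h2, actW_eq, mul_assoc]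

/-- Pulling at `u` through a cons whose vertex is adjacent to `u`. -/
lemma pullB_cons {u : V} (l : (v : V) × G v) (m : W G) (h1 : l.1 ≠ u) (h2 : Γ.Adj l.1 u) :
    pullB Γ u (l :: m) = ((pullB Γ u m).1, l :: (pullB Γ u m).2) := by
  rcases hp : pull Γ G u m with _ | ⟨c, t⟩
  · rw [pullB_none hp, pullB_none (by rw [pull_cons_adj _ _ h1 h2, hp]; rfl)]
  · rw [pullB_some hp, pullB_some (p := (c, l :: t)) (by rw [pull_cons_adj _ _ h1 h2, hp]; rfl)]

lemma pullB_consW {u v : V} (hne : v ≠ u) (hadj : Γ.Adj v u) (x : G v) (s : W G) :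
    pullB Γ u (consW v x s) = ((pullB Γ u s).1, consW v x ((pullB Γ u s).2)) := by
  by_cases hx : x = 1
  · rw [hx, consW_one, consW_one]
  · rw [consW_ne _ hx, pullB_cons _ _ hne hadj, consW_ne _ hx]

lemma pull_none_of_pullB {u v : V} (hne : v ≠ u) (hadj : Γ.Adj v u) {w : W G}
    (hr : Red Γ G w) (hu : pull Γ G u w = none) :
    pull Γ G u (pullB Γ v w).2 = none := by
  rcases hp : pull Γ G v w with _ | ⟨b, s⟩
  · rw [pullB_none hp]; exact hu
  · rw [pullB_some hp]
    obtain ⟨_, _, _, heqv⟩ := pull_some hr hp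
    have h2 := heqv.pull_none (v := u) hu
    rw [pull_cons_adj _ _ hne hadj] at h2
    exact Option.map_eq_none_iff.mp h2

/-- Diamond lemma: pulls at two adjacent vertices interact trivially. -/
lemma diamond {u v : V} (huv : Γ.Adj u v) {w : W G} (hr : Red Γ G w) :
    (pullB Γ v (pullB Γ u w).2).1 = (pullB Γ v w).1 ∧
    (pullB Γ u (pullB Γ v w).2).1 = (pullB Γ u w).1 ∧
    (pullB Γ v (pullB Γ u w).2).2 = (pullB Γ u (pullB Γ v w).2).2 := by
  induction w with
  | nil =>
    simp [pullB_none (pull_nil u), pullB_none (pull_nil v)]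
  | cons l t0 ih =>
    obtain ⟨lv, lg⟩ := l
    by_cases hcu : lv = u
    · subst hcu
      have h1 := pullB_some (pull_cons_self (Γ := Γ) lv lg t0)
      rcases hpv : pull Γ G v t0 with _ | ⟨b0, s0⟩
      · have h2 : pull Γ G v (⟨lv, lg⟩ :: t0) = none := by
          rw [pull_cons_adj _ _ (Γ.ne_of_adj huv) huv, hpv]; rfl
        simp [h1, pullB_none h2, pullB_none hpv]
      · have h2 : pull Γ G v (⟨lv, lg⟩ :: t0) = some (b0, ⟨lv, lg⟩ :: s0) := by
          rw [pull_cons_adj _ _ (Γ.ne_of_adj huv) huv, hpv]; rfl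
        simp [h1, pullB_some h2, pullB_some hpv, pullB_some (pull_cons_self (Γ := Γ) lv lg s0)]
    · by_cases hcv : lv = v
      · subst hcv
        have h1 := pullB_some (pull_cons_self (Γ := Γ) lv lg t0)
        rcases hpu : pull Γ G u t0 with _ | ⟨a0, s0⟩
        · have h2 : pull Γ G u (⟨lv, lg⟩ :: t0) = none := by
            rw [pull_cons_adj _ _ (Γ.ne_of_adj huv.symm) huv.symm, hpu]; rfl
          simp [h1, pullB_none h2, pullB_none hpu]
        · have h2 : pull Γ G u (⟨lv, lg⟩ :: t0) = some (a0, ⟨lv, lg⟩ :: s0) := by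
            rw [pull_cons_adj _ _ (Γ.ne_of_adj huv.symm) huv.symm, hpu]; rfl
          simp [h1, pullB_some h2, pullB_some hpu, pullB_some (pull_cons_self (Γ := Γ) lv lg s0)]
      · by_cases hau : Γ.Adj lv u
        · by_cases hav : Γ.Adj lv v
          · obtain ⟨d1, d2, d3⟩ := ih hr.tail
            rw [pullB_cons _ _ hcu hau, pullB_cons _ _ hcv hav]
            simp only
            rw [pullB_cons _ _ hcv hav, pullB_cons _ _ hcu hau, d1, d2, d3]
            exact ⟨rfl, rfl, rfl⟩
          · -- lv not adjacent to v, so pull at v yields nothing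
            have hpvw : pull Γ G v (⟨lv, lg⟩ :: t0) = none := pull_cons_nadj _ _ hcv hav
            have h2 : pull Γ G v (pullB Γ u (⟨lv, lg⟩ :: t0)).2 = none :=
              pull_none_of_pullB (Γ.ne_of_adj huv) huv hr hpvw
            simp [pullB_none hpvw, pullB_none h2]
        · -- lv not adjacent to u, so pull at u yields nothing
          have hpuw : pull Γ G u (⟨lv, lg⟩ :: t0) = none := pull_cons_nadj _ _ hcu hau
          have h2 : pull Γ G u (pullB Γ v (⟨lv, lg⟩ :: t0)).2 = none :=
            pull_none_of_pullB (Γ.ne_of_adj huv.symm) huv.symm hr hpuw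
          simp [pullB_none hpuw, pullB_none h2]

/-- Actions at adjacent vertices commute. -/
lemma actW_comm {u v : V} (huv : Γ.Adj u v) (g : G u) (h : G v) {w : W G}
    (hr : Red Γ G w) :
    Eqv Γ G (actW Γ u g (actW Γ v h w)) (actW Γ v h (actW Γ u g w)) := by
  obtain ⟨d1, d2, d3⟩ := diamond huv hr
  rw [actW_eq v h w, actW_eq u g w, actW_eq, actW_eq,
    pullB_consW (Γ.ne_of_adj huv.symm) huv.symm, pullB_consW (Γ.ne_of_adj huv) huv,
    d1, d2, d3]
  set x := g * (pullB Γ u w).1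
  set y := h * (pullB Γ v w).1
  set r := (pullB Γ u (pullB Γ v w).2).2
  by_cases hx : x = 1
  · rw [hx, consW_one, consW_one]
    exact Eqv.refl _
  · by_cases hy : y = 1
    · rw [hy, consW_one, consW_one]
      exact Eqv.refl _
    · rw [consW_ne _ hx, consW_ne _ hy, consW_ne _ hy, consW_ne _ hx]
      exact Relation.EqvGen.rel _ _ (Stp.swap _ _ _ huv)


lemma consW_eqv {v : V} (x : G v) {t t' : W G} (h : Eqv Γ G t t') :
    Eqv Γ G (consW v x t) (consW v x t') := by
  by_cases hx : x = 1
  · rw [hx, consW_one, consW_one]; exact h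
  · rw [consW_ne _ hx, consW_ne _ hx]; exact h.cons _

lemma actW_eqv {v : V} (g : G v) {w w' : W G} (h : Eqv Γ G w w') :
    Eqv Γ G (actW Γ v g w) (actW Γ v g w') := by
  rcases h.pullRel (v := v) with ⟨h1, h2⟩ | ⟨c, t, t', h1, h2, h3⟩
  · rw [actW_eq, actW_eq, pullB_none h1, pullB_none h2]
    exact consW_eqv _ h
  · rw [actW_eq, actW_eq, pullB_some h1, pullB_some h2]
    exact consW_eqv _ h3

variable (Γ G)

/-- The type of reduced words. -/
def RW := {w : W G // Red Γ G w}

instance rwSetoid : Setoid (RW Γ G) :=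
  ⟨fun a b => Eqv Γ G a.1 b.1,
    ⟨fun a => Eqv.refl _, fun h => h.symm, fun h h' => h.trans h'⟩⟩

/-- Normal forms: reduced words up to shuffle equivalence. -/
def NF := Quotient (rwSetoid Γ G)

noncomputable def act (v : V) (g : G v) : NF Γ G → NF Γ G :=
  Quotient.map (fun w => ⟨actW Γ v g w.1, red_actW g w.2⟩) (fun _ _ hab => actW_eqv g hab)

lemma act_mk (v : V) (g : G v) (w : RW Γ G) :
    act Γ G v g ⟦w⟧ = ⟦⟨actW Γ v g w.1, red_actW g w.2⟩⟧ := rfl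

noncomputable def actP (v : V) (g : G v) : Equiv.Perm (NF Γ G) where
  toFun := act Γ G v g
  invFun := act Γ G v g⁻¹
  left_inv x := by
    refine Quotient.inductionOn x (fun w => ?_)
    refine Quotient.sound ?_
    show Eqv Γ G (actW Γ v g⁻¹ (actW Γ v g w.1)) w.1
    rw [actW_mul _ _ w.2, inv_mul_cancel]
    exact actW_one w.2
  right_inv x := by
    refine Quotient.inductionOn x (fun w => ?_)
    refine Quotient.sound ?_
    show Eqv Γ G (actW Γ v g (actW Γ v g⁻¹ w.1)) w.1
    rw [actW_mul _ _ w.2, mul_inv_cancel]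
    exact actW_one w.2

noncomputable def phi (v : V) : G v →* Equiv.Perm (NF Γ G) where
  toFun g := actP Γ G v g
  map_one' := by
    ext x
    refine Quotient.inductionOn x (fun w => ?_)
    exact Quotient.sound (actW_one w.2)
  map_mul' g g' := by
    ext x
    refine Quotient.inductionOn x (fun w => ?_)
    show act Γ G v (g * g') ⟦w⟧ = act Γ G v g (act Γ G v g' ⟦w⟧)
    refine Quotient.sound ?_
    show Eqv Γ G (actW Γ v (g * g') w.1) (actW Γ v g (actW Γ v g' w.1))
    rw [actW_mul g g' w.2]
    exact Eqv.refl _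

noncomputable def psi : Monoid.CoprodI G →* Equiv.Perm (NF Γ G) :=
  Monoid.CoprodI.lift (phi Γ G)

lemma psi_rels {r : Monoid.CoprodI G} (hr : r ∈ graphProductRels Γ G) : psi Γ G r = 1 := by
  obtain ⟨u, v, g, h, hadj, rfl⟩ := hr
  rw [map_mul, map_mul, map_mul, map_inv, map_inv, psi, Monoid.CoprodI.lift_of,
    Monoid.CoprodI.lift_of, ← commutatorElement_def, commutatorElement_eq_one_iff_commute]
  ext x
  refine Quotient.inductionOn x (fun w => ?_)
  show act Γ G u g (act Γ G v h ⟦w⟧) = act Γ G v h (act Γ G u g ⟦w⟧)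
  exact Quotient.sound (actW_comm hadj g h w.2)

noncomputable def rho : GraphProduct Γ G →* Equiv.Perm (NF Γ G) :=
  QuotientGroup.lift _ (psi Γ G)
    (fun x hx => Subgroup.normalClosure_le_normal
      (fun r hr => MonoidHom.mem_ker.mpr (psi_rels Γ G hr)) hx)

lemma rho_mk (y : Monoid.CoprodI G) :
    rho Γ G (QuotientGroup.mk y) = psi Γ G y := rfl

def emptyRW : RW Γ G := ⟨[], trivial⟩

noncomputable def nf (x : GraphProduct Γ G) : NF Γ G := rho Γ G x ⟦emptyRW Γ G⟧

noncomputable def lenNF : NF Γ G → ℕ :=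
  Quotient.lift (fun w : RW Γ G => w.1.length) (fun _ _ h => Eqv.length_eq h)

noncomputable def prodW (w : W G) : GraphProduct Γ G :=
  (w.map fun l => GraphProduct.of Γ G l.1 l.2).prod

variable {Γ G}

@[simp] lemma prodW_nil : prodW Γ G ([] : W G) = 1 := rfl

lemma prodW_cons (l : (v : V) × G v) (t : W G) :
    prodW Γ G (l :: t) = GraphProduct.of Γ G l.1 l.2 * prodW Γ G t := by
  simp [prodW]

lemma of_comm {u v : V} (huv : Γ.Adj u v) (g : G u) (h : G v) :
    Commute (GraphProduct.of Γ G u g) (GraphProduct.of Γ G v h) := by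
  have hrel : (Monoid.CoprodI.of g * Monoid.CoprodI.of h *
      (Monoid.CoprodI.of g)⁻¹ * (Monoid.CoprodI.of h)⁻¹ : Monoid.CoprodI G) ∈
      Subgroup.normalClosure (graphProductRels Γ G) :=
    Subgroup.subset_normalClosure ⟨u, v, g, h, huv, rfl⟩
  have h1 : (QuotientGroup.mk (Monoid.CoprodI.of g * Monoid.CoprodI.of h *
      (Monoid.CoprodI.of g)⁻¹ * (Monoid.CoprodI.of h)⁻¹) : GraphProduct Γ G) = 1 :=
    (QuotientGroup.eq_one_iff _).mpr hrel
  rw [QuotientGroup.mk_mul, QuotientGroup.mk_mul, QuotientGroup.mk_mul,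
    QuotientGroup.mk_inv, QuotientGroup.mk_inv, ← commutatorElement_def,
    commutatorElement_eq_one_iff_commute] at h1
  exact h1

lemma prodW_stp {w w' : W G} (h : Stp Γ G w w') : prodW Γ G w = prodW Γ G w' := by
  induction h with
  | swap a b t hab =>
    rw [prodW_cons, prodW_cons, prodW_cons, prodW_cons, ← mul_assoc, ← mul_assoc,
      (of_comm hab a.2 b.2).eq]
  | cons a _ ih => rw [prodW_cons, prodW_cons, ih]

lemma prodW_eqv {w w' : W G} (h : Eqv Γ G w w') : prodW Γ G w = prodW Γ G w' := by
  induction h with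
  | rel x y hxy => exact prodW_stp hxy
  | refl x => rfl
  | symm x y _ ih => exact ih.symm
  | trans x y z _ _ ih1 ih2 => exact ih1.trans ih2

variable (Γ G)

noncomputable def prodNF : NF Γ G → GraphProduct Γ G :=
  Quotient.lift (fun w : RW Γ G => prodW Γ G w.1) (fun _ _ h => prodW_eqv h)

variable {Γ G}

lemma prodW_consW {v : V} (x : G v) (t : W G) :
    prodW Γ G (consW v x t) = GraphProduct.of Γ G v x * prodW Γ G t := by
  by_cases hx : x = 1
  · rw [hx, consW_one, map_one, one_mul]
  · rw [consW_ne _ hx, prodW_cons]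

lemma prodW_actW {v : V} (g : G v) {w : W G} (hr : Red Γ G w) :
    prodW Γ G (actW Γ v g w) = GraphProduct.of Γ G v g * prodW Γ G w := by
  obtain ⟨_, _, heqv, _⟩ := pullB_spec (v := v) hr
  rw [actW_eq, prodW_consW, prodW_eqv heqv, prodW_consW, ← mul_assoc, ← map_mul]

lemma prodNF_psi (y : Monoid.CoprodI G) (q : NF Γ G) :
    prodNF Γ G (psi Γ G y q) = QuotientGroup.mk y * prodNF Γ G q := by
  induction y using Monoid.CoprodI.induction_on generalizing q with
  | one => simp [map_one]
  | of i m =>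
    rw [psi, Monoid.CoprodI.lift_of]
    refine Quotient.inductionOn q (fun w => ?_)
    show prodNF Γ G (act Γ G i m ⟦w⟧) = _
    rw [act_mk]
    show prodW Γ G (actW Γ i m w.1) = _
    rw [prodW_actW m w.2]
    rfl
  | mul x y ihx ihy =>
    rw [map_mul]
    show prodNF Γ G (psi Γ G x (psi Γ G y q)) = _
    rw [ihx, ihy, QuotientGroup.mk_mul, mul_assoc]

lemma prodNF_nf (x : GraphProduct Γ G) : prodNF Γ G (nf Γ G x) = x := by
  obtain ⟨y, rfl⟩ := QuotientGroup.mk_surjective x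
  rw [nf, rho_mk]
  refine (prodNF_psi y _).trans ?_
  show _ * prodW Γ G [] = _
  rw [prodW_nil, mul_one]

lemma nf_of_mul {v : V} (g : G v) (x : GraphProduct Γ G) :
    nf Γ G (GraphProduct.of Γ G v g * x) = act Γ G v g (nf Γ G x) := by
  rw [nf, map_mul]
  have h1 : rho Γ G (GraphProduct.of Γ G v g) = actP Γ G v g := by
    show rho Γ G (QuotientGroup.mk (Monoid.CoprodI.of g)) = _
    rw [rho_mk, psi, Monoid.CoprodI.lift_of]
    rfl
  rw [h1]
  rfl

@[simp] lemma nf_one : nf Γ G (1 : GraphProduct Γ G) = ⟦emptyRW Γ G⟧ := by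
  rw [nf, map_one]
  rfl

lemma lenNF_act_le {v : V} (g : G v) (q : NF Γ G) :
    lenNF Γ G (act Γ G v g q) ≤ lenNF Γ G q + 1 := by
  refine Quotient.inductionOn q (fun w => ?_)
  rw [act_mk]
  exact actW_length g w.1


section Cayley

variable (Γ G)

noncomputable def mulIso (a : GraphProduct Γ G) : cayley Γ G ≃g cayley Γ G where
  toEquiv :=
    { toFun := fun x => a * x
      invFun := fun x => a⁻¹ * x
      left_inv := fun x => inv_mul_cancel_left a x
      right_inv := fun x => mul_inv_cancel_left a x }
  map_rel_iff' := by
    intro x y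
    show (cayley Γ G).Adj (a * x) (a * y) ↔ (cayley Γ G).Adj x y
    have h1 : (a * x)⁻¹ * (a * y) = x⁻¹ * y := by
      rw [mul_inv_rev, mul_assoc, inv_mul_cancel_left]
    constructor
    · rintro ⟨hne, v, hv⟩
      exact ⟨fun hh => hne (by rw [hh]), v, by rwa [h1] at hv⟩
    · rintro ⟨hne, v, hv⟩
      exact ⟨fun hh => hne (mul_left_cancel hh), v, by rwa [h1]⟩

variable {Γ G}

lemma mulIso_toHom_apply (a x : GraphProduct Γ G) :
    (mulIso Γ G a).toHom x = a * x := rfl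

lemma dist_mul_left_le (a x y : GraphProduct Γ G) :
    (cayley Γ G).dist (a * x) (a * y) ≤ (cayley Γ G).dist x y := by
  by_cases h : (cayley Γ G).Reachable x y
  · obtain ⟨p, hp⟩ := h.exists_walk_length_eq_dist
    calc (cayley Γ G).dist (a * x) (a * y)
        ≤ (p.map (mulIso Γ G a).toHom).length := SimpleGraph.dist_le _
      _ = p.length := SimpleGraph.Walk.length_map _ _
      _ = (cayley Γ G).dist x y := hp
  · rw [SimpleGraph.dist_eq_zero_of_not_reachable h,
      SimpleGraph.dist_eq_zero_of_not_reachable (fun hr : (cayley Γ G).Reachable _ _ => h ?_)]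
    have h2 := hr.map (mulIso Γ G a⁻¹).toHom
    have e1 : (mulIso Γ G a⁻¹).toHom (a * x) = x := inv_mul_cancel_left a x
    have e2 : (mulIso Γ G a⁻¹).toHom (a * y) = y := inv_mul_cancel_left a y
    rwa [e1, e2] at h2

lemma dist_mul_left (a x y : GraphProduct Γ G) :
    (cayley Γ G).dist (a * x) (a * y) = (cayley Γ G).dist x y := by
  refine le_antisymm (dist_mul_left_le a x y) ?_
  have := dist_mul_left_le a⁻¹ (a * x) (a * y)
  rwa [inv_mul_cancel_left, inv_mul_cancel_left] at this

lemma dist_eq_dist_one (x y : GraphProduct Γ G) :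
    (cayley Γ G).dist x y = (cayley Γ G).dist 1 (x⁻¹ * y) := by
  have := dist_mul_left x⁻¹ x y
  rw [inv_mul_cancel] at this
  exact this.symm

lemma exists_walk_prodW (w : W G) :
    ∃ p : (cayley Γ G).Walk 1 (prodW Γ G w), p.length ≤ w.length := by
  induction w with
  | nil => exact ⟨SimpleGraph.Walk.nil, by simp⟩
  | cons l t ih =>
    obtain ⟨p, hp⟩ := ih
    by_cases h1 : GraphProduct.of Γ G l.1 l.2 = 1
    · refine ⟨(p.copy rfl (by rw [prodW_cons, h1, one_mul])), ?_⟩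
      rw [SimpleGraph.Walk.length_copy]
      exact hp.trans (by simp)
    · have hadj : (cayley Γ G).Adj 1 (GraphProduct.of Γ G l.1 l.2) := by
        refine ⟨fun hh => h1 hh.symm, l.1, ?_⟩
        rw [inv_one, one_mul]
        exact ⟨l.2, rfl⟩
      refine ⟨SimpleGraph.Walk.cons hadj
        ((p.map (mulIso Γ G (GraphProduct.of Γ G l.1 l.2)).toHom).copy
          (by rw [mulIso_toHom_apply, mul_one])
          (by rw [mulIso_toHom_apply]; exact (prodW_cons l t).symm)), ?_⟩
      rw [SimpleGraph.Walk.length_cons, SimpleGraph.Walk.length_copy,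
        SimpleGraph.Walk.length_map]
      simpa using hp

lemma lenNF_le_walk {x y : GraphProduct Γ G} (p : (cayley Γ G).Walk x y) :
    lenNF Γ G (nf Γ G (x⁻¹ * y)) ≤ p.length := by
  induction p with
  | nil =>
    rw [inv_mul_cancel, nf_one]
    exact le_refl 0
  | @cons a b c hadj p ih =>
    obtain ⟨hne, i, cc, hc⟩ := hadj
    have hsplit : a⁻¹ * c = GraphProduct.of Γ G i cc * (b⁻¹ * c) := by
      rw [hc, mul_assoc, mul_inv_cancel_left]
    rw [hsplit, nf_of_mul]
    exact (lenNF_act_le cc _).trans (Nat.add_le_add_right ih 1)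

lemma dist_one_eq_lenNF (x : GraphProduct Γ G) :
    (cayley Γ G).dist 1 x = lenNF Γ G (nf Γ G x) := by
  obtain ⟨w, hw⟩ := Quotient.exists_rep (nf Γ G x)
  have hx : prodW Γ G w.1 = x := by
    have := prodNF_nf (Γ := Γ) (G := G) x
    rw [← hw] at this
    exact this
  obtain ⟨p, hp⟩ := exists_walk_prodW (Γ := Γ) w.1
  refine le_antisymm ?_ ?_
  · have h2 : lenNF Γ G (nf Γ G x) = w.1.length := by rw [← hw]; rfl
    rw [h2, ← hx]
    exact (SimpleGraph.dist_le p).trans hp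
  · have hreach : (cayley Γ G).Reachable 1 x := by
      rw [← hx]; exact ⟨p⟩
    obtain ⟨q, hq⟩ := hreach.exists_walk_length_eq_dist
    have := lenNF_le_walk q
    rwa [inv_one, one_mul, hq] at this

lemma mem_vertexSubgroup {u : V} {k : GraphProduct Γ G} :
    k ∈ vertexSubgroup Γ G u ↔ ∃ c : G u, GraphProduct.of Γ G u c = k :=
  MonoidHom.mem_range

open scoped Classical in
lemma act_length_eq {u : V} {w : W G} (hr : Red Γ G w) (c : G u) :
    (actW Γ u c⁻¹ w).length
      = (pullB Γ u w).2.length + (if c = (pullB Γ u w).1 then 0 else 1) := by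
  rw [actW_eq]
  rcases hp : pull Γ G u w with _ | ⟨h0, t0⟩
  · rw [pullB_none hp]
    by_cases hc : c = 1
    · simp [hc, consW_one]
    · show (consW u (c⁻¹ * 1) w).length = w.length + _
      rw [mul_one, consW_ne _ (inv_ne_one.mpr hc), if_neg hc]
      simp
  · rw [pullB_some hp]
    have hne : h0 ≠ 1 := (pull_some hr hp).1
    by_cases hc : c = h0
    · subst hc
      show (consW u (c⁻¹ * c) t0).length = t0.length + _
      rw [inv_mul_cancel, consW_one, if_pos rfl]
      simp
    · show (consW u (c⁻¹ * h0) t0).length = t0.length + _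
      have h2 : c⁻¹ * h0 ≠ 1 := fun hh => hc (inv_mul_eq_one.mp hh)
      rw [consW_ne _ h2, if_neg hc]
      simp

end Cayley

end GPNF

/-- **Lemma.** Every element of the graph product has a unique closest point on each clique
`Ĝ_u` in the Cayley graph `X(Γ,𝒢)`. -/
theorem unique_projection_onto_clique {V : Type} [Fintype V]
    (Γ : SimpleGraph V) (G : V → Type) [∀ v, Group (G v)] [∀ v, Nontrivial (G v)]
    (u : V) (g : GraphProduct Γ G) :
    ∃! h : GraphProduct Γ G, h ∈ vertexSubgroup Γ G u ∧
      ∀ k ∈ vertexSubgroup Γ G u, (cayley Γ G).dist g h ≤ (cayley Γ G).dist g k := by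
  classical
  obtain ⟨w, hw⟩ := Quotient.exists_rep (GPNF.nf Γ G g)
  have key : ∀ c : G u, (cayley Γ G).dist g (GraphProduct.of Γ G u c) =
      (GPNF.pullB Γ u w.1).2.length + (if c = (GPNF.pullB Γ u w.1).1 then 0 else 1) := by
    intro c
    rw [SimpleGraph.dist_comm, GPNF.dist_eq_dist_one, ← map_inv, GPNF.dist_one_eq_lenNF,
      GPNF.nf_of_mul, ← hw, GPNF.act_mk]
    show (GPNF.actW Γ u c⁻¹ w.1).length = _
    exact GPNF.act_length_eq w.2 c
  refine ⟨GraphProduct.of Γ G u (GPNF.pullB Γ u w.1).1,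
    ⟨GPNF.mem_vertexSubgroup.mpr ⟨_, rfl⟩, ?_⟩, ?_⟩
  · intro k hk
    obtain ⟨c, rfl⟩ := GPNF.mem_vertexSubgroup.mp hk
    rw [key, key, if_pos rfl]
    split_ifs <;> omega
  · rintro h' ⟨hm, hmin⟩
    obtain ⟨c', rfl⟩ := GPNF.mem_vertexSubgroup.mp hm
    have h2 := hmin (GraphProduct.of Γ G u (GPNF.pullB Γ u w.1).1)
      (GPNF.mem_vertexSubgroup.mpr ⟨_, rfl⟩)
    rw [key, key] at h2
    by_cases hc : c' = (GPNF.pullB Γ u w.1).1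
    · rw [hc]
    · rw [if_neg hc, if_pos rfl] at h2
      omega
end

section
/- Let Γ be a finite simplicial graph and 𝒢 = (G_v)_{v∈V} a family of nontrivial groups, and let X(Γ,𝒢) be the Cayley graph of Γ𝒢 with respect to the generating set ⋃_{v∈V} (Ĝ_v ∖ {1}), with graph distance d. For every subset Λ ⊆ V, the subgroup ⟨Λ⟩ is convex in X(Γ,𝒢): if x, y ∈ ⟨Λ⟩ and z ∈ Γ𝒢 satisfy d(x,z) + d(z,y) = d(x,y), then z ∈ ⟨Λ⟩. -/
open scoped Pointwise

section ConvexAux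

variable {V : Type} (Γ : SimpleGraph V) (G : V → Type) [∀ v, Group (G v)]

open Classical in
/-- The canonical retraction of the graph product onto the parabolic subgroup `⟨Λ⟩`. -/
noncomputable def parabolicRetr (Λ : Set V) : GraphProduct Γ G →* GraphProduct Γ G :=
  QuotientGroup.lift _
    (Monoid.CoprodI.lift fun v => if v ∈ Λ then GraphProduct.of Γ G v else 1)
    (by
      refine Subgroup.normalClosure_le_normal ?_
      rintro _ ⟨u, v, g, h, hadj, rfl⟩
      have key : ∀ (a b : V) (p : G a) (q : G b), Γ.Adj a b →
          GraphProduct.of Γ G a p * GraphProduct.of Γ G b q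
            = GraphProduct.of Γ G b q * GraphProduct.of Γ G a p := by
        intro a b p q hab
        have h1 : ((QuotientGroup.mk (Monoid.CoprodI.of p * Monoid.CoprodI.of q *
            (Monoid.CoprodI.of p)⁻¹ * (Monoid.CoprodI.of q)⁻¹) : GraphProduct Γ G)) = 1 :=
          (QuotientGroup.eq_one_iff _).2
            (Subgroup.subset_normalClosure ⟨a, b, p, q, hab, rfl⟩)
        have h2 : GraphProduct.of Γ G a p * GraphProduct.of Γ G b q *
            (GraphProduct.of Γ G a p)⁻¹ * (GraphProduct.of Γ G b q)⁻¹ = 1 := h1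
        have h3 : (GraphProduct.of Γ G a p * GraphProduct.of Γ G b q) *
            (GraphProduct.of Γ G b q * GraphProduct.of Γ G a p)⁻¹ = 1 := by
          rw [mul_inv_rev, ← mul_assoc]; exact h2
        exact mul_inv_eq_one.mp h3
      simp only [SetLike.mem_coe, MonoidHom.mem_ker, map_mul, map_inv, Monoid.CoprodI.lift_of]
      split_ifs with h1 h2 h2
      · rw [key u v g h hadj]; group
      · simp
      · simp
      · simp)

lemma parabolicRetr_fix_vertex {Λ : Set V} {v : V} (hv : v ∈ Λ)
    {x : GraphProduct Γ G} (hx : x ∈ vertexSubgroup Γ G v) :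
    parabolicRetr Γ G Λ x = x := by
  classical
  obtain ⟨m, rfl⟩ := MonoidHom.mem_range.mp hx
  show parabolicRetr Γ G Λ
      (QuotientGroup.mk (Monoid.CoprodI.of m)) = _
  rw [parabolicRetr, QuotientGroup.lift_mk', Monoid.CoprodI.lift_of, if_pos hv]

lemma parabolicRetr_kill_vertex {Λ : Set V} {v : V} (hv : v ∉ Λ)
    {x : GraphProduct Γ G} (hx : x ∈ vertexSubgroup Γ G v) :
    parabolicRetr Γ G Λ x = 1 := by
  classical
  obtain ⟨m, rfl⟩ := MonoidHom.mem_range.mp hx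
  show parabolicRetr Γ G Λ
      (QuotientGroup.mk (Monoid.CoprodI.of m)) = _
  rw [parabolicRetr, QuotientGroup.lift_mk', Monoid.CoprodI.lift_of, if_neg hv]
  rfl

lemma vertex_le_span {Λ : Set V} {v : V} (hv : v ∈ Λ) :
    vertexSubgroup Γ G v ≤ spanSubgroup Γ G Λ :=
  le_iSup₂ (f := fun (v : V) (_ : v ∈ Λ) => vertexSubgroup Γ G v) v hv

lemma parabolicRetr_fix (Λ : Set V) {g : GraphProduct Γ G}
    (hg : g ∈ spanSubgroup Γ G Λ) : parabolicRetr Γ G Λ g = g := by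
  have hle : spanSubgroup Γ G Λ ≤
      MonoidHom.eqLocus (parabolicRetr Γ G Λ) (MonoidHom.id _) := by
    refine iSup₂_le fun v hv x hx => ?_
    exact parabolicRetr_fix_vertex Γ G hv hx
  exact hle hg

lemma exists_walk_of_list (l : List (GraphProduct Γ G)) :
    ∀ (x y : GraphProduct Γ G),
      (∀ g ∈ l, ∃ v, g ∈ vertexSubgroup Γ G v) → x⁻¹ * y = l.prod →
      ∃ p : (cayley Γ G).Walk x y, p.length ≤ l.length := by
  induction l with
  | nil =>
    intro x y _ hxy
    simp only [List.prod_nil] at hxy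
    obtain rfl : x = y := inv_mul_eq_one.mp hxy
    exact ⟨.nil, by simp⟩
  | cons a t ih =>
    intro x y hmem hxy
    rw [List.prod_cons] at hxy
    by_cases ha : a = 1
    · subst ha
      rw [one_mul] at hxy
      obtain ⟨p, hp⟩ := ih x y (fun g hg => hmem g (List.mem_cons_of_mem _ hg)) hxy
      exact ⟨p, hp.trans (Nat.le_succ _)⟩
    · obtain ⟨v, hv⟩ := hmem a List.mem_cons_self
      have hne : x ≠ x * a := fun h => ha (left_eq_mul.mp h)
      have hadj : (cayley Γ G).Adj x (x * a) :=
        ⟨hne, v, by simpa [inv_mul_cancel_left] using hv⟩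
      have hxy' : (x * a)⁻¹ * y = t.prod := by
        rw [mul_inv_rev, mul_assoc, hxy, ← mul_assoc, inv_mul_cancel, one_mul]
      obtain ⟨p, hp⟩ := ih (x * a) y (fun g hg => hmem g (List.mem_cons_of_mem _ hg)) hxy'
      exact ⟨.cons hadj p, by simpa using Nat.succ_le_succ hp⟩

lemma list_of_walk : ∀ {x y : GraphProduct Γ G} (p : (cayley Γ G).Walk x y),
    ∃ l : List (GraphProduct Γ G), (∀ g ∈ l, ∃ v, g ∈ vertexSubgroup Γ G v) ∧
      x⁻¹ * y = l.prod ∧ l.length = p.length := by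
  intro x y p
  induction p with
  | nil => exact ⟨[], by simp, by simp, rfl⟩
  | @cons x b y h q ih =>
    obtain ⟨l, hl, hprod, hlen⟩ := ih
    obtain ⟨hne, v, hv⟩ := h
    refine ⟨(x⁻¹ * b) :: l, ?_, ?_, ?_⟩
    · intro g hg
      rcases List.mem_cons.mp hg with rfl | hg
      · exact ⟨v, hv⟩
      · exact hl g hg
    · rw [List.prod_cons, ← hprod, mul_assoc, mul_inv_cancel_left]
    · simp [hlen]; rfl

lemma exists_list_repr (g : GraphProduct Γ G) :
    ∃ l : List (GraphProduct Γ G),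
      (∀ a ∈ l, ∃ v, a ∈ vertexSubgroup Γ G v) ∧ l.prod = g := by
  obtain ⟨w, rfl⟩ := QuotientGroup.mk'_surjective
    (Subgroup.normalClosure (graphProductRels Γ G)) g
  induction w using Monoid.CoprodI.induction_on with
  | one => exact ⟨[], by simp, by simp⟩
  | of i m =>
    exact ⟨[GraphProduct.of Γ G i m], by
      intro a ha
      rw [List.mem_singleton] at ha
      exact ⟨i, ha ▸ ⟨m, rfl⟩⟩, by simp; rfl⟩
  | mul a b hA hB =>
    obtain ⟨la, hla, hpa⟩ := hA
    obtain ⟨lb, hlb, hpb⟩ := hB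
    refine ⟨la ++ lb, ?_, ?_⟩
    · intro g hg
      rcases List.mem_append.mp hg with h | h
      exacts [hla g h, hlb g h]
    · rw [List.prod_append, hpa, hpb, map_mul]

lemma retr_list (Λ : Set V) (l : List (GraphProduct Γ G)) :
    (∀ g ∈ l, ∃ v, g ∈ vertexSubgroup Γ G v) →
    ∃ l' : List (GraphProduct Γ G),
      (∀ g ∈ l', ∃ v, g ∈ vertexSubgroup Γ G v) ∧
      l'.prod = parabolicRetr Γ G Λ l.prod ∧ l'.length ≤ l.length ∧
      (l'.length = l.length → ∀ g ∈ l, g ∈ spanSubgroup Γ G Λ) := by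
  induction l with
  | nil => exact fun _ => ⟨[], by simp, by simp, le_refl _, by simp⟩
  | cons a t ih =>
    intro hmem
    obtain ⟨v, hv⟩ := hmem a List.mem_cons_self
    obtain ⟨l', h1, h2, h3, h4⟩ := ih (fun g hg => hmem g (List.mem_cons_of_mem _ hg))
    by_cases hvL : v ∈ Λ
    · refine ⟨a :: l', ?_, ?_, ?_, ?_⟩
      · intro g hg
        rcases List.mem_cons.mp hg with rfl | hg
        · exact ⟨v, hv⟩
        · exact h1 g hg
      · rw [List.prod_cons, List.prod_cons, map_mul, h2,
          parabolicRetr_fix_vertex Γ G hvL hv]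
      · simpa using Nat.succ_le_succ h3
      · intro heq g hg
        rcases List.mem_cons.mp hg with rfl | hg
        · exact vertex_le_span Γ G hvL hv
        · exact h4 (by simpa using heq) g hg
    · refine ⟨l', h1, ?_, h3.trans (Nat.le_succ _), fun heq => absurd heq (by simp only [List.length_cons]; omega)⟩
      rw [List.prod_cons, map_mul, parabolicRetr_kill_vertex Γ G hvL hv, one_mul, h2]

end ConvexAux

/-- **Observation.** Parabolic subgroups `⟨Λ⟩` are convex in the Cayley graph `X(Γ,𝒢)`. -/
theorem spanSubgroup_convex {V : Type} [Fintype V]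
    (Γ : SimpleGraph V) (G : V → Type) [∀ v, Group (G v)] [∀ v, Nontrivial (G v)]
    (Λ : Set V) (x y z : GraphProduct Γ G)
    (hx : x ∈ spanSubgroup Γ G Λ) (hy : y ∈ spanSubgroup Γ G Λ)
    (hz : (cayley Γ G).dist x z + (cayley Γ G).dist z y = (cayley Γ G).dist x y) :
    z ∈ spanSubgroup Γ G Λ := by
  have hreach : ∀ a b : GraphProduct Γ G, (cayley Γ G).Reachable a b := by
    intro a b
    obtain ⟨l, hl, hp⟩ := exists_list_repr Γ G (a⁻¹ * b)
    obtain ⟨p, _⟩ := exists_walk_of_list Γ G l a b hl hp.symm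
    exact ⟨p⟩
  obtain ⟨p1, hp1⟩ := (hreach x z).exists_walk_length_eq_dist
  obtain ⟨p2, hp2⟩ := (hreach z y).exists_walk_length_eq_dist
  obtain ⟨la, hla, hpa, hlena⟩ := list_of_walk Γ G p1
  obtain ⟨lb, hlb, hpb, hlenb⟩ := list_of_walk Γ G p2
  obtain ⟨la2, ha1, ha2, ha3, ha4⟩ := retr_list Γ G Λ la hla
  obtain ⟨lb2, hb1, hb2, hb3, hb4⟩ := retr_list Γ G Λ lb hlb
  have hxy : x⁻¹ * y ∈ spanSubgroup Γ G Λ := mul_mem (inv_mem hx) hy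
  have hprod : x⁻¹ * y = (la2 ++ lb2).prod := by
    rw [List.prod_append, ha2, hb2, ← map_mul, ← hpa, ← hpb,
      show x⁻¹ * z * (z⁻¹ * y) = x⁻¹ * y by group,
      parabolicRetr_fix Γ G Λ hxy]
  obtain ⟨q, hq⟩ := exists_walk_of_list Γ G (la2 ++ lb2) x y
    (by
      intro g hg
      rcases List.mem_append.mp hg with h | h
      exacts [ha1 g h, hb1 g h])
    hprod
  have hdxy : (cayley Γ G).dist x y ≤ la2.length + lb2.length := by
    have h1 := SimpleGraph.dist_le q
    have h2 := hq
    rw [List.length_append] at h2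
    omega
  have e1 : la.length = (cayley Γ G).dist x z := hlena.trans hp1
  have e2 : lb.length = (cayley Γ G).dist z y := hlenb.trans hp2
  have heqa : la2.length = la.length := by omega
  have hmz : x⁻¹ * z ∈ spanSubgroup Γ G Λ := by
    rw [hpa]
    exact list_prod_mem (ha4 heqa)
  simpa using mul_mem hx hmz
end
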